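/- arXiv:2405.20229 — 7 statements merged into one kernel-verified Lean document; each statement's English description precedes it below -/
import Mathlib

section
/- Let V be an N-dimensional space of entire functions spanned by f₁, …, f_N, and for t ∈ ℂ define g_V(t, u) to be the determinant of the N × N matrix whose first N−1 rows are (f₁^{(i−1)}(t), …, f_N^{(i−1)}(t)) for i = 1, …, N−1 and whose last row is (f₁(u), …, f_N(u)). If t is not a zero of the Wronskian Wr(f₁, …, f_N), then the N functions u ↦ ∂_t^j g_V(t, u) for j = 0, 1, …, N−1 form a basis of V. -/
private lemma entire_iter {h : ℂ → ℂ} (hh : Differentiable ℂ h) (n : ℕ) :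
    Differentiable ℂ (iteratedDeriv n h) := by
  rw [iteratedDeriv_eq_iterate]
  exact ((hh.contDiff (n := (⊤ : ℕ∞))).iterate_deriv n).differentiable (by simp)

private lemma entire_deriv {h : ℂ → ℂ} (hh : Differentiable ℂ h) :
    Differentiable ℂ (deriv h) := by
  simpa [iteratedDeriv_one] using entire_iter hh 1

private lemma diff_det {N : ℕ} {M : ℂ → Matrix (Fin N) (Fin N) ℂ}
    (h : ∀ i j, Differentiable ℂ fun s => M s i j) :
    Differentiable ℂ fun s => (M s).det := by
  simp only [Matrix.det_apply']
  exact Differentiable.fun_sum fun σ _ =>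
    (Differentiable.fun_finsetProd fun i _ => h (σ i) i).const_mul _

private lemma det_row_sum {N : ℕ} (M : Matrix (Fin N) (Fin N) ℂ) (r : Fin N)
    (w : Fin N → Fin N → ℂ) (s : Finset (Fin N)) :
    (M.updateRow r (∑ k ∈ s, w k)).det = ∑ k ∈ s, (M.updateRow r (w k)).det := by
  induction s using Finset.induction_on with
  | empty =>
      simp only [Finset.sum_empty]
      exact Matrix.det_eq_zero_of_row_eq_zero r (by simp)
  | insert _ _ hk ih =>
      rw [Finset.sum_insert hk, Matrix.det_updateRow_add, ih, Finset.sum_insert hk]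

private lemma det_row_expand {N : ℕ} (M : Matrix (Fin N) (Fin N) ℂ) (r : Fin N)
    (v : Fin N → ℂ) :
    (M.updateRow r v).det = ∑ k, v k * (M.updateRow r (Pi.single k 1)).det := by
  have hv : v = ∑ k, v k • (Pi.single k 1 : Fin N → ℂ) := by
    funext j
    simp [Pi.single_apply]
  conv_lhs => rw [hv]
  rw [det_row_sum]
  exact Finset.sum_congr rfl fun k _ => by rw [Matrix.det_updateRow_smul]

private lemma iteratedDeriv_sum_mul {N : ℕ} {c : Fin N → ℂ → ℂ}
    (hc : ∀ k, Differentiable ℂ (c k)) (a : Fin N → ℂ) (n : ℕ) (s : ℂ) :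
    iteratedDeriv n (fun x => ∑ k, a k * c k x) s = ∑ k, a k * iteratedDeriv n (c k) s := by
  induction n generalizing c with
  | zero => simp
  | succ n ih =>
      rw [iteratedDeriv_succ']
      have hd : deriv (fun x => ∑ k, a k * c k x) = fun x => ∑ k, a k * deriv (c k) x := by
        funext x
        rw [deriv_fun_sum fun k _ => ((hc k).differentiableAt.const_mul _)]
        exact Finset.sum_congr rfl fun k _ => deriv_const_mul _ (hc k).differentiableAt
      rw [hd, ih fun k => entire_deriv (hc k)]
      exact Finset.sum_congr rfl fun k _ => by rw [← iteratedDeriv_succ']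

private lemma deriv_sum_mul {N : ℕ} {a b : Fin N → ℂ → ℂ}
    (ha : ∀ k, Differentiable ℂ (a k)) (hb : ∀ k, Differentiable ℂ (b k)) (s : ℂ) :
    deriv (fun x => ∑ k, a k x * b k x) s
      = ∑ k, (deriv (a k) s * b k s + a k s * deriv (b k) s) := by
  rw [deriv_fun_sum fun k _ => ((ha k).differentiableAt.fun_mul (hb k).differentiableAt)]
  exact Finset.sum_congr rfl fun k _ =>
    deriv_mul (ha k).differentiableAt (hb k).differentiableAt

private noncomputable def Dm {N : ℕ} (f : Fin N → ℂ → ℂ) (s : ℂ) : Matrix (Fin N) (Fin N) ℂ :=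
  Matrix.of fun i j => iteratedDeriv (i : ℕ) (f j) s

private noncomputable def cf {N : ℕ} (f : Fin N → ℂ → ℂ) (L k : Fin N) (s : ℂ) : ℂ :=
  ((Dm f s).updateRow L (Pi.single k 1)).det

private noncomputable def psi {N : ℕ} (f : Fin N → ℂ → ℂ) (L : Fin N) (j i : ℕ) (s : ℂ) : ℂ :=
  ∑ k, iteratedDeriv j (cf f L k) s * iteratedDeriv i (f k) s

private lemma cf_diff {N : ℕ} {f : Fin N → ℂ → ℂ} (hf : ∀ j, Differentiable ℂ (f j))
    (L k : Fin N) : Differentiable ℂ (cf f L k) := by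
  apply diff_det
  intro i j
  rcases eq_or_ne i L with h | h
  · simpa [Matrix.updateRow_apply, h] using differentiable_const _
  · simpa [Matrix.updateRow_apply, h, Dm] using entire_iter (hf j) i

private lemma psi_expand {N : ℕ} (f : Fin N → ℂ → ℂ) (L : Fin N) (i : ℕ) (s : ℂ) :
    psi f L 0 i s = ((Dm f s).updateRow L (fun j => iteratedDeriv i (f j) s)).det := by
  rw [det_row_expand]
  unfold psi cf
  simp [iteratedDeriv_zero, mul_comm]

private lemma psi_zero_lt {N : ℕ} (f : Fin N → ℂ → ℂ) (L : Fin N) (hL : (L : ℕ) = N - 1)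
    {i : ℕ} (hi : i < N - 1) (s : ℂ) : psi f L 0 i s = 0 := by
  rw [psi_expand]
  have hiN : i < N := by omega
  apply Matrix.det_zero_of_row_eq (i := (⟨i, hiN⟩ : Fin N)) (j := L)
  · intro h
    have : i = (L : ℕ) := congrArg Fin.val h
    omega
  · funext j
    rw [Matrix.updateRow_apply, Matrix.updateRow_apply]
    simp only [if_pos rfl]
    have hne : (⟨i, hiN⟩ : Fin N) ≠ L := by
      intro h
      have : i = (L : ℕ) := congrArg Fin.val h
      omega
    rw [if_neg hne]
    rfl

private lemma psi_zero_top {N : ℕ} (f : Fin N → ℂ → ℂ) (L : Fin N) (hL : (L : ℕ) = N - 1)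
    (s : ℂ) : psi f L 0 (N - 1) s = (Dm f s).det := by
  rw [psi_expand]
  have : (fun j => iteratedDeriv (N - 1) (f j) s) = Dm f s L := by
    funext j
    simp [Dm, hL]
  rw [this, Matrix.updateRow_eq_self]

private lemma psi_rec {N : ℕ} {f : Fin N → ℂ → ℂ} (hf : ∀ j, Differentiable ℂ (f j))
    (L : Fin N) (j i : ℕ) (s : ℂ) :
    deriv (psi f L j i) s = psi f L (j + 1) i s + psi f L j (i + 1) s := by
  unfold psi
  rw [deriv_sum_mul (fun k => entire_iter (cf_diff hf L k) j) (fun k => entire_iter (hf k) i)]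
  rw [Finset.sum_add_distrib]
  congr 1
  · exact Finset.sum_congr rfl fun k _ => by rw [← iteratedDeriv_succ]
  · exact Finset.sum_congr rfl fun k _ => by rw [← iteratedDeriv_succ]

private lemma psi_tri {N : ℕ} {f : Fin N → ℂ → ℂ} (hf : ∀ j, Differentiable ℂ (f j))
    (L : Fin N) (hL : (L : ℕ) = N - 1) :
    ∀ j, j ≤ N - 1 →
      (∀ i, i + j < N - 1 → ∀ s, psi f L j i s = 0) ∧
      (∀ s, psi f L j (N - 1 - j) s = (-1 : ℂ) ^ j * (Dm f s).det) := by
  intro j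
  induction j with
  | zero =>
      intro _
      refine ⟨fun i hi s => psi_zero_lt f L hL (by omega) s, fun s => by
        simpa using psi_zero_top f L hL s⟩
  | succ j ih =>
      intro hj
      obtain ⟨ih1, ih2⟩ := ih (by omega)
      have hzero : ∀ i, i + j < N - 1 → psi f L j i = fun _ => 0 :=
        fun i hi => funext (ih1 i hi)
      constructor
      · intro i hi s
        have h1 : deriv (psi f L j i) s = psi f L (j + 1) i s + psi f L j (i + 1) s :=
          psi_rec hf L j i s
        rw [hzero i (by omega)] at h1
        rw [deriv_const] at h1
        have h2 : psi f L j (i + 1) s = 0 := ih1 (i + 1) (by omega) s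
        rw [h2, add_zero] at h1
        exact h1.symm
      · intro s
        set i := N - 1 - (j + 1) with hi
        have h1 : deriv (psi f L j i) s = psi f L (j + 1) i s + psi f L j (i + 1) s :=
          psi_rec hf L j i s
        rw [hzero i (by omega)] at h1
        rw [deriv_const] at h1
        have h2 : psi f L j (i + 1) s = (-1 : ℂ) ^ j * (Dm f s).det := by
          have : i + 1 = N - 1 - j := by omega
          rw [this]
          exact ih2 s
        rw [h2] at h1
        have h3 : psi f L (j + 1) i s = -((-1 : ℂ) ^ j * (Dm f s).det) :=
          eq_neg_of_add_eq_zero_left h1.symm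
        rw [h3, pow_succ]
        ring

/-- Let `V` be an `N`-dimensional space of entire functions with basis `f₁, …, f_N`,
and for `t` define `g_V(t, u)` as the determinant of the `N × N` matrix whose first
`N-1` rows are `(f₁^{(i-1)}(t), …, f_N^{(i-1)}(t))`, `i = 1, …, N-1`, and whose last
row is `(f₁(u), …, f_N(u))`.  If `t` is not a zero of the Wronskian
`Wr(f₁, …, f_N)`, then the functions `u ↦ ∂_t^j g_V(t, u)`, `j = 0, …, N-1`, form a
basis of `V` (they are linearly independent and span `V`). -/
theorem stmt8 {N : ℕ} (hN : 1 ≤ N) (f : Fin N → ℂ → ℂ)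
    (hf : ∀ j, Differentiable ℂ (f j)) (hind : LinearIndependent ℂ f)
    (t : ℂ) (g : ℂ → ℂ → ℂ)
    (hg : ∀ s u : ℂ, g s u = Matrix.det (Matrix.of fun i j : Fin N =>
        if (i : ℕ) = N - 1 then f j u else iteratedDeriv (i : ℕ) (f j) s))
    (hW : Matrix.det (Matrix.of fun i j : Fin N => iteratedDeriv (i : ℕ) (f j) t) ≠ 0) :
    LinearIndependent ℂ (fun j : Fin N => fun u : ℂ => iteratedDeriv (j : ℕ) (fun s => g s u) t)
      ∧ Submodule.span ℂ
          (Set.range fun j : Fin N => fun u : ℂ => iteratedDeriv (j : ℕ) (fun s => g s u) t)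
        = Submodule.span ℂ (Set.range f) := by
  classical
  set L : Fin N := ⟨N - 1, by omega⟩ with hLdef
  have hL : (L : ℕ) = N - 1 := rfl
  have hcdiff : ∀ k, Differentiable ℂ (cf f L k) := cf_diff hf L
  -- expansion of g along the last row
  have hgc : ∀ s u, g s u = ∑ k, f k u * cf f L k s := by
    intro s u
    rw [hg]
    have hM : (Matrix.of fun i j : Fin N =>
        if (i : ℕ) = N - 1 then f j u else iteratedDeriv (i : ℕ) (f j) s)
        = (Dm f s).updateRow L (fun j => f j u) := by
      funext i j
      rcases eq_or_ne i L with h | h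
      · subst h
        simp [Matrix.updateRow_apply, hL, Dm]
      · have h' : (i : ℕ) ≠ N - 1 := by
          intro hh
          exact h (Fin.ext (by rw [hh, hL]))
        simp [Matrix.updateRow_apply, h, h', Dm]
    rw [hM, det_row_expand]
    rfl
  set A : Matrix (Fin N) (Fin N) ℂ :=
    Matrix.of (fun j k => iteratedDeriv (j : ℕ) (cf f L k) t) with hAdef
  have hh : ∀ j : Fin N, (fun u : ℂ => iteratedDeriv (j : ℕ) (fun s => g s u) t)
      = fun u => ∑ k, A j k * f k u := by
    intro j
    funext u
    have hfun : (fun s => g s u) = fun s => ∑ k, f k u * cf f L k s :=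
      funext fun s => hgc s u
    rw [hfun, iteratedDeriv_sum_mul hcdiff]
    exact Finset.sum_congr rfl fun k _ => by rw [mul_comm]; rfl
  -- the matrix B = A * (Dm f t).transpose is given by psi
  have hdet : (Dm f t).det ≠ 0 := hW
  have hB : ∀ j i : Fin N, (A * (Dm f t).transpose) j i = psi f L (j : ℕ) (i : ℕ) t := by
    intro j i
    rw [Matrix.mul_apply]
    exact Finset.sum_congr rfl fun k _ => by rw [Matrix.transpose_apply]; rfl
  have htri := psi_tri hf L hL
  have hdetB : (A * (Dm f t).transpose).det ≠ 0 := by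
    set B := A * (Dm f t).transpose with hBdef
    have h1 : (B.submatrix id ⇑(Fin.revPerm (n := N))).det
        = (Equiv.Perm.sign (Fin.revPerm (n := N)) : ℂ) * B.det :=
      Matrix.det_permute' _ _
    have h2 : (B.submatrix id ⇑(Fin.revPerm (n := N))).det
        = ∏ q : Fin N, (B.submatrix id ⇑(Fin.revPerm (n := N))) q q := by
      apply Matrix.det_of_lowerTriangular
      intro a b hab
      have hab' : (a : ℕ) < (b : ℕ) := hab
      rw [Matrix.submatrix_apply, id, hB]
      have hrev : ((Fin.revPerm (n := N)) b : ℕ) = N - 1 - (b : ℕ) := by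
        simp [Fin.revPerm, Fin.rev]
        omega
      rw [hrev]
      exact (htri (a : ℕ) (by omega)).1 (N - 1 - (b : ℕ)) (by omega) t
    have h3 : ∀ q : Fin N, (B.submatrix id ⇑(Fin.revPerm (n := N))) q q
        = (-1 : ℂ) ^ (q : ℕ) * (Dm f t).det := by
      intro q
      rw [Matrix.submatrix_apply, id, hB]
      have hrev : ((Fin.revPerm (n := N)) q : ℕ) = N - 1 - (q : ℕ) := by
        simp [Fin.revPerm, Fin.rev]
        omega
      rw [hrev]
      exact (htri (q : ℕ) (by omega)).2 t
    have h4 : (B.submatrix id ⇑(Fin.revPerm (n := N))).det ≠ 0 := by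
      rw [h2]
      apply Finset.prod_ne_zero_iff.mpr
      intro q _
      rw [h3]
      exact mul_ne_zero (pow_ne_zero _ (by norm_num)) hdet
    intro hc0
    rw [h1, hc0, mul_zero] at h4
    exact h4 rfl
  have hdetA : A.det ≠ 0 := by
    intro h
    apply hdetB
    rw [Matrix.det_mul, h, zero_mul]
  have hAunit : IsUnit A.det := isUnit_iff_ne_zero.mpr hdetA
  -- each basis vector f k as a combination of the new family
  have hfind := Fintype.linearIndependent_iff.mp hind
  constructor
  · rw [Fintype.linearIndependent_iff]
    intro d hd
    have hd' : ∑ k, (Matrix.vecMul d A) k • f k = 0 := by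
      funext u
      have hdu := congrFun hd u
      simp only [Finset.sum_apply, Pi.smul_apply, Pi.zero_apply, smul_eq_mul] at hdu ⊢
      have : ∀ j : Fin N, iteratedDeriv (j : ℕ) (fun s => g s u) t = ∑ k, A j k * f k u :=
        fun j => congrFun (hh j) u
      rw [Finset.sum_congr rfl (fun j _ => by rw [this j])] at hdu
      rw [← hdu]
      simp only [Finset.mul_sum]
      rw [Finset.sum_comm]
      refine Finset.sum_congr rfl fun k _ => ?_
      simp only [Matrix.vecMul, dotProduct, Finset.sum_mul]
      exact Finset.sum_congr rfl fun j _ => by ring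
    have hv : ∀ k, (Matrix.vecMul d A) k = 0 := hfind _ hd'
    have hv0 : Matrix.vecMul d A = 0 := funext hv
    intro i
    have : d = Matrix.vecMul (Matrix.vecMul d A) A⁻¹ := by
      rw [Matrix.vecMul_vecMul, Matrix.mul_nonsing_inv _ hAunit, Matrix.vecMul_one]
    rw [this, hv0, Matrix.zero_vecMul]
    rfl
  · apply le_antisymm
    · rw [Submodule.span_le]
      rintro x ⟨j, rfl⟩
      show (fun u : ℂ => iteratedDeriv (j : ℕ) (fun s => g s u) t) ∈ _
      rw [hh j]
      have : (fun u => ∑ k, A j k * f k u) = ∑ k, A j k • f k := by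
        funext u
        simp
      rw [this]
      exact Submodule.sum_mem _ fun k _ =>
        Submodule.smul_mem _ _ (Submodule.subset_span ⟨k, rfl⟩)
    · rw [Submodule.span_le]
      rintro x ⟨k, rfl⟩
      have hfk : f k = ∑ j, (A⁻¹) k j •
          (fun u : ℂ => iteratedDeriv (j : ℕ) (fun s => g s u) t) := by
        funext u
        simp only [Finset.sum_apply, Pi.smul_apply, smul_eq_mul]
        rw [Finset.sum_congr rfl (fun j _ => by rw [congrFun (hh j) u])]
        have : ∑ j, (A⁻¹) k j * ∑ m, A j m * f m u
            = ∑ m, (A⁻¹ * A) k m * f m u := by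
          simp only [Finset.mul_sum, Matrix.mul_apply, Finset.sum_mul]
          rw [Finset.sum_comm]
          exact Finset.sum_congr rfl fun m _ => Finset.sum_congr rfl fun j _ => by ring
        rw [this, Matrix.nonsing_inv_mul _ hAunit]
        simp [Matrix.one_apply]
      rw [hfk]
      exact Submodule.sum_mem _ fun j _ =>
        Submodule.smul_mem _ _ (Submodule.subset_span ⟨j, rfl⟩)
end

section
/- For the space V = span(e^{h₁u}, …, e^{h_N u}) of pure exponentials with distinct complex exponents h₁,…,h_N, and any t ∈ ℂ and partition λ with at most N parts, the Plücker coordinate of V about u = t indexed by λ — i.e. the determinant det((d/du)^{λ_{N−i+1}+i−1} f_j(t))_{1≤i,j≤N} with f_j(u) = e^{h_j u} — equals e^{(h₁+⋯+h_N)t} · Δ(h₁,…,h_N) · s_λ(h₁,…,h_N), hence the vector of Plücker coordinates is (up to a common nonzero scalar) the vector of Schur polynomial values (s_λ(h₁,…,h_N))_λ. -/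
/-- For the space `V = span(e^{h₁u}, …, e^{h_N u})` of pure exponentials with
distinct exponents, any `t ∈ ℂ`, and any partition `λ` with at most `N` parts
(given as an antitone `lam : Fin N → ℕ`, zero-indexed so `λ₁ = lam 0`), the Plücker
coordinate of `V` about `u = t` indexed by `λ`, namely the determinant whose row
`i` (zero-indexed) consists of the derivatives of order `λ_{N-i} + i`
(one-indexed: order `λ_{N-i+1} + i - 1`) of the `f_j(u) = e^{h_j u}` at `t`, equals
`e^{(h₁+⋯+h_N)t} · Δ(h₁,…,h_N) · s_λ(h₁,…,h_N)`, where `Δ = ∏_{i<j}(h_j - h_i)` is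
the Vandermonde determinant and `s_λ` is the Schur polynomial, pinned down by the
bialternant formula `Δ · s_λ = det(h_j^{λ_{N-i} + i})_{i,j}`. -/
theorem stmt9 {N : ℕ} (h : Fin N → ℂ) (hdist : Function.Injective h) (t : ℂ)
    (lam : Fin N → ℕ) (hanti : Antitone lam) (s : ℂ)
    (hs : (∏ p ∈ Finset.univ.filter fun p : Fin N × Fin N => p.1 < p.2,
          (h p.2 - h p.1)) * s
        = Matrix.det (Matrix.of fun i j : Fin N => h j ^ (lam (Fin.rev i) + (i : ℕ)))) :
    Matrix.det (Matrix.of fun i j : Fin N =>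
        iteratedDeriv (lam (Fin.rev i) + (i : ℕ)) (fun u : ℂ => Complex.exp (h j * u)) t)
      = Complex.exp ((∑ j : Fin N, h j) * t)
          * (∏ p ∈ Finset.univ.filter fun p : Fin N × Fin N => p.1 < p.2,
              (h p.2 - h p.1)) * s := by
  have hmat : (Matrix.of fun i j : Fin N =>
        iteratedDeriv (lam (Fin.rev i) + (i : ℕ)) (fun u : ℂ => Complex.exp (h j * u)) t)
      = Matrix.of fun i j : Fin N =>
        Complex.exp (h j * t) * h j ^ (lam (Fin.rev i) + (i : ℕ)) := by
    ext i j
    simp only [Matrix.of_apply, iteratedDeriv_cexp_const_mul]; ring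
  rw [hmat]
  erw [Matrix.det_mul_row (fun j => Complex.exp (h j * t)) (Matrix.of fun i j : Fin N => h j ^ (lam (Fin.rev i) + (i : ℕ)))]
  rw [mul_assoc, hs]
  congr 1
  rw [← Complex.exp_sum, Finset.sum_mul]
end

section
/- Let V be the span of N quasi-exponentials e^{h_i u} p_i(u) where deg p_i = d_i, and suppose that whenever h_i = h_j with i ≠ j we have d_i ≠ d_j. If there are l distinct values among h₁,…,h_N with multiplicities m₁,…,m_l, then Wr(e^{h₁u}p₁, …, e^{h_N u}p_N) = e^{(h₁+⋯+h_N)u} g(u) for a polynomial g of degree exactly d₁ + ⋯ + d_N − C(m₁,2) − ⋯ − C(m_l,2), where C(m,2) = m(m−1)/2. -/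
open Polynomial Finset

noncomputable section
namespace Stmt10


/-- The operator `D + c·id` on `ℂ[X]`. -/
def Lop (c : ℂ) : Module.End ℂ (Polynomial ℂ) :=
  Polynomial.derivative + c • 1

lemma end_add_smul_pow (f : Module.End ℂ (Polynomial ℂ)) (c : ℂ) (i : ℕ) (q : Polynomial ℂ) :
    ((f + c • (1 : Module.End ℂ (Polynomial ℂ))) ^ i) q
      = ∑ k ∈ Finset.range (i+1), ((i.choose k : ℂ) * c ^ (i - k)) • (f ^ k) q := by
  have hc : Commute f (c • (1 : Module.End ℂ (Polynomial ℂ))) :=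
    (Commute.one_right f).smul_right c
  rw [hc.add_pow]
  rw [LinearMap.coe_sum, Finset.sum_apply]
  refine Finset.sum_congr rfl fun k hk => ?_
  have : (c • (1 : Module.End ℂ (Polynomial ℂ))) ^ (i - k) = c ^ (i-k) • 1 := by
    rw [_root_.smul_pow, one_pow]
  rw [this, Module.End.mul_apply, Module.End.mul_apply]
  have h2 : ((i.choose k : Module.End ℂ (Polynomial ℂ))) q = (i.choose k : ℂ) • q := by
    simp [Module.End.natCast_apply, Polynomial.smul_eq_C_mul]
  rw [h2, LinearMap.smul_apply, Module.End.one_apply, map_smul, map_smul,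
    smul_smul]
  rw [mul_comm]

lemma end_add_smul_pow' {N : ℕ} (f : Module.End ℂ (Polynomial ℂ)) (c : ℂ) (i : ℕ)
    (hi : i < N) (q : Polynomial ℂ) :
    ((f + c • (1 : Module.End ℂ (Polynomial ℂ))) ^ i) q
      = ∑ k ∈ Finset.range N, ((i.choose k : ℂ) * c ^ (i - k)) • (f ^ k) q := by
  rw [end_add_smul_pow]
  refine Finset.sum_subset (by intro x hx; simp at hx ⊢; omega) fun k hk hk2 => ?_
  have : i.choose k = 0 := Nat.choose_eq_zero_of_lt (by simp at hk2; omega)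
  simp [this]

lemma Lop_pow_apply (c : ℂ) (q : Polynomial ℂ) (i : ℕ) :
    ((Lop c) ^ i) q = ∑ k ∈ Finset.range (i+1),
      ((i.choose k : ℂ) * c ^ (i - k)) • Polynomial.derivative^[k] q := by
  have := end_add_smul_pow Polynomial.derivative c i q
  rw [Lop]
  rw [this]
  refine Finset.sum_congr rfl fun k hk => ?_
  rw [Module.End.pow_apply]


variable {N : ℕ}

/-- Extension of the binomial expansion to a uniform range. -/
lemma Lop_pow_apply' (c : ℂ) (q : Polynomial ℂ) (i : ℕ) (hi : i < N) :
    ((Lop c) ^ i) q = ∑ k ∈ Finset.range N,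
      ((i.choose k : ℂ) * c ^ (i - k)) • Polynomial.derivative^[k] q := by
  rw [Lop_pow_apply]
  refine Finset.sum_subset (by intro x hx; simp at hx ⊢; omega) fun k hk hk2 => ?_
  have : i.choose k = 0 := Nat.choose_eq_zero_of_lt (by simp at hk2; omega)
  simp [this]

/-- The polynomial matrix whose determinant is (up to exponential factor) the Wronskian. -/
def Mmat (h : Fin N → ℂ) (p : Fin N → Polynomial ℂ) : Matrix (Fin N) (Fin N) (Polynomial ℂ) :=
  Matrix.of fun i j : Fin N => ((Lop (h j)) ^ (i : ℕ)) (p j)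

def gpoly (h : Fin N → ℂ) (p : Fin N → Polynomial ℂ) : Polynomial ℂ := (Mmat h p).det

lemma hasDerivAt_exp_mul (c : ℂ) (q : Polynomial ℂ) (v : ℂ) :
    HasDerivAt (fun v : ℂ => Complex.exp (c * v) * q.eval v)
      (Complex.exp (c * v) * ((Lop c) q).eval v) v := by
  have h1 : HasDerivAt (fun v : ℂ => Complex.exp (c * v)) (Complex.exp (c * v) * c) v := by
    simpa using (((hasDerivAt_id v).const_mul c).cexp)
  have h2 : HasDerivAt (fun v : ℂ => q.eval v) (q.derivative.eval v) v := q.hasDerivAt v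
  have := h1.mul h2
  refine this.congr_deriv ?_
  have : (Lop c) q = q.derivative + c • q := by
    simp [Lop]
  rw [this]
  simp [Polynomial.eval_smul]
  try ring

lemma iteratedDeriv_exp_mul (c : ℂ) (i : ℕ) (q : Polynomial ℂ) :
    iteratedDeriv i (fun v : ℂ => Complex.exp (c * v) * q.eval v)
      = fun v : ℂ => Complex.exp (c * v) * (((Lop c) ^ i) q).eval v := by
  induction i generalizing q with
  | zero => simp
  | succ n ih =>
    rw [iteratedDeriv_succ']
    have hd : (deriv fun v : ℂ => Complex.exp (c * v) * q.eval v)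
        = fun v : ℂ => Complex.exp (c * v) * ((Lop c) q).eval v := by
      funext v
      exact (hasDerivAt_exp_mul c q v).deriv
    rw [hd, ih ((Lop c) q)]
    funext v
    rw [← Module.End.mul_apply, ← pow_succ]

/-- Evaluation identity: the Wronskian determinant equals the exponential factor times `gpoly`. -/
lemma det_eval (h : Fin N → ℂ) (p : Fin N → Polynomial ℂ) (u : ℂ) :
    Matrix.det (Matrix.of fun i j : Fin N =>
        iteratedDeriv (i : ℕ) (fun v : ℂ => Complex.exp (h j * v) * (p j).eval v) u)
      = Complex.exp ((∑ i : Fin N, h i) * u) * (gpoly h p).eval u := by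
  have hM : (Matrix.of fun i j : Fin N =>
        iteratedDeriv (i : ℕ) (fun v : ℂ => Complex.exp (h j * v) * (p j).eval v) u)
      = Matrix.of fun i j : Fin N =>
        (fun j' => Complex.exp (h j' * u)) j * ((Mmat h p).map (Polynomial.evalRingHom u)) i j := by
    ext i j
    simp only [Matrix.of_apply, Matrix.map_apply]
    rw [iteratedDeriv_exp_mul]
    rfl
  rw [hM, Matrix.det_mul_row]
  have hdet := (Polynomial.evalRingHom u).map_det (Mmat h p)
  rw [show (Mmat h p).map (⇑(Polynomial.evalRingHom u)) = (Polynomial.evalRingHom u).mapMatrix (Mmat h p) from rfl, ← hdet]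
  have : ∏ j : Fin N, Complex.exp (h j * u) = Complex.exp ((∑ i : Fin N, h i) * u) := by
    rw [← Complex.exp_sum, Finset.sum_mul]
  rw [this]
  rfl

/-- `gpoly` is invariant under a common shift of the exponents. -/
lemma gpoly_shift (h : Fin N → ℂ) (p : Fin N → Polynomial ℂ) (a : ℂ) :
    gpoly (fun j => h j + a) p = gpoly h p := by
  classical
  have hL : ∀ j : Fin N, Lop (h j + a) = Lop (h j) + a • 1 := by
    intro j; simp only [Lop, add_smul]; abel
  have hM : Mmat (fun j => h j + a) p
      = (Matrix.of fun i k : Fin N =>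
          (Polynomial.C (((i:ℕ).choose (k:ℕ) : ℂ) * a ^ ((i:ℕ) - (k:ℕ))))) * Mmat h p := by
    refine Matrix.ext fun i j => ?_
    rw [Matrix.mul_apply]
    simp only [Mmat, Matrix.of_apply, hL]
    rw [end_add_smul_pow' (Lop (h j)) a (i:ℕ) i.isLt (p j),
      ← Fin.sum_univ_eq_sum_range (fun k => ((((i:ℕ).choose k : ℂ)) * a ^ ((i:ℕ) - k)) • ((Lop (h j)) ^ k) (p j)) N]
    refine Finset.sum_congr rfl fun k _ => ?_
    rw [Polynomial.smul_eq_C_mul]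
  rw [gpoly, gpoly, hM, Matrix.det_mul]
  have hdet1 : (Matrix.of fun i k : Fin N =>
      (Polynomial.C (((i:ℕ).choose (k:ℕ) : ℂ) * a ^ ((i:ℕ) - (k:ℕ))))).det = 1 := by
    rw [Matrix.det_of_lowerTriangular]
    · refine Finset.prod_eq_one fun i _ => by simp
    · intro i k hik
      have : (k:ℕ) > (i:ℕ) := hik
      simp [Nat.choose_eq_zero_of_lt this]
  rw [hdet1, one_mul]


/-- Generic expansion of a determinant whose rows are sums of scaled vectors. -/
lemma det_sum_smul {R : Type*} [CommRing R] (v : Fin N → Fin N → R)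
    (w : Fin N → Fin N → Fin N → R) :
    Matrix.det (Matrix.of fun i j : Fin N => ∑ k : Fin N, v j k * w j k i)
      = ∑ r : Fin N → Fin N, (∏ j, v j (r j)) *
          Matrix.det (Matrix.of fun i j : Fin N => w j (r j) i) := by
  classical
  rw [← Matrix.det_transpose]
  have h1 : Matrix.transpose (Matrix.of fun i j : Fin N => ∑ k : Fin N, v j k * w j k i)
      = Matrix.of (fun j : Fin N => ∑ k : Fin N, v j k • w j k) := by
    refine Matrix.ext fun j i => ?_
    simp [Matrix.transpose_apply, Finset.sum_apply]
  rw [h1]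
  have h2 := MultilinearMap.map_sum
    (Matrix.detRowAlternating (R := R) (n := Fin N)).toMultilinearMap
    (g := fun (j : Fin N) (k : Fin N) => v j k • w j k)
  have h3 : Matrix.det (Matrix.of fun j : Fin N => ∑ k : Fin N, v j k • w j k)
      = ∑ r : Fin N → Fin N,
          Matrix.detRowAlternating (fun j : Fin N => v j (r j) • w j (r j)) := h2
  rw [h3]
  refine Finset.sum_congr rfl fun r _ => ?_
  have h4 := MultilinearMap.map_smul_univ
    (Matrix.detRowAlternating (R := R) (n := Fin N)).toMultilinearMap
    (fun j => v j (r j)) (fun j => w j (r j))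
  have h5 : Matrix.detRowAlternating (fun j : Fin N => v j (r j) • w j (r j))
      = (∏ j, v j (r j)) • Matrix.det (Matrix.of fun j i : Fin N => w j (r j) i) := h4
  rw [h5, smul_eq_mul, ← Matrix.det_transpose (Matrix.of fun j i : Fin N => w j (r j) i)]
  rfl


def Vmat (h : Fin N → ℂ) (k : Fin N → ℕ) : Matrix (Fin N) (Fin N) ℂ :=
  Matrix.of fun i j : Fin N => ((i:ℕ).choose (k j) : ℂ) * h j ^ ((i:ℕ) - k j)

lemma gpoly_expand (h : Fin N → ℂ) (p : Fin N → Polynomial ℂ) :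
    gpoly h p = ∑ r : Fin N → Fin N,
      (∏ j, Polynomial.derivative^[(r j : ℕ)] (p j)) *
        Polynomial.C ((Vmat h (fun j => (r j : ℕ))).det) := by
  classical
  rw [gpoly]
  have hM : Mmat h p = Matrix.of fun i j : Fin N =>
      ∑ k : Fin N, (Polynomial.derivative^[(k:ℕ)] (p j)) *
        (Polynomial.C (((i:ℕ).choose (k:ℕ) : ℂ) * h j ^ ((i:ℕ) - (k:ℕ)))) := by
    refine Matrix.ext fun i j => ?_
    simp only [Mmat, Matrix.of_apply]
    rw [Lop_pow_apply' (h j) (p j) (i:ℕ) i.isLt,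
      ← Fin.sum_univ_eq_sum_range (fun k => ((((i:ℕ).choose k : ℂ)) * (h j) ^ ((i:ℕ) - k)) • Polynomial.derivative^[k] (p j)) N]
    refine Finset.sum_congr rfl fun k _ => ?_
    rw [Polynomial.smul_eq_C_mul, mul_comm]
  rw [hM, det_sum_smul (fun j k => Polynomial.derivative^[(k:ℕ)] (p j))
    (fun j k i => Polynomial.C (((i:ℕ).choose (k:ℕ) : ℂ) * h j ^ ((i:ℕ) - (k:ℕ))))]
  refine Finset.sum_congr rfl fun r _ => ?_
  congr 1
  have hm := (Polynomial.C : ℂ →+* Polynomial ℂ).map_det (Vmat h (fun j => (r j : ℕ)))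
  rw [hm]
  rfl

/-! ### Combinatorial lemmas -/

lemma sum_range_id_eq_choose (n : ℕ) : ∑ i ∈ Finset.range n, i = n.choose 2 := by
  have h2 := Finset.sum_range_id_mul_two n
  rw [Nat.choose_two_right, ← h2]
  omega

lemma range_sum_le (t : Finset ℕ) : ∑ i ∈ Finset.range t.card, i ≤ ∑ x ∈ t, x := by
  classical
  obtain ⟨n, hn⟩ : ∃ n, t.card = n := ⟨_, rfl⟩
  induction n generalizing t with
  | zero => simp [hn]
  | succ n ih =>
    have ht : t.Nonempty := Finset.card_pos.mp (by omega)
    have hxm : t.max' ht ∈ t := t.max'_mem ht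
    set x := t.max' ht with hxdef
    have hsub : t ⊆ Finset.range (x+1) := by
      intro y hy
      simp only [Finset.mem_range]
      exact Nat.lt_succ_of_le (t.le_max' y hy)
    have hcard : t.card ≤ x + 1 := by
      simpa using Finset.card_le_card hsub
    have herase : (t.erase x).card = n := by
      rw [Finset.card_erase_of_mem hxm, hn]
      omega
    have hle := ih (t.erase x) herase
    rw [herase] at hle
    have hadd : (∑ y ∈ t.erase x, y) + x = ∑ y ∈ t, y := by
      simpa using Finset.sum_erase_add t (fun y => y) hxm
    have hsucc : ∑ i ∈ Finset.range (n+1), i = (∑ i ∈ Finset.range n, i) + n :=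
      Finset.sum_range_succ _ n
    rw [hn]
    omega

lemma range_sum_lt (t : Finset ℕ) (x : ℕ) (hx : x ∈ t) (hcard : t.card ≤ x) :
    ∑ i ∈ Finset.range t.card, i < ∑ y ∈ t, y := by
  classical
  have h1 : 1 ≤ t.card := Finset.card_pos.mpr ⟨x, hx⟩
  have herase : (t.erase x).card = t.card - 1 := Finset.card_erase_of_mem hx
  have hle := range_sum_le (t.erase x)
  rw [herase] at hle
  have hsplit : ∑ i ∈ Finset.range t.card, i
      = (∑ i ∈ Finset.range (t.card - 1), i) + (t.card - 1) := by
    conv_lhs => rw [show t.card = (t.card - 1) + 1 by omega]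
    rw [Finset.sum_range_succ]
  have hadd : (∑ y ∈ t.erase x, y) + x = ∑ y ∈ t, y := by
    simpa using Finset.sum_erase_add t (fun y => y) hx
  omega

def fib (h : Fin N → ℂ) (c : ℂ) : Finset (Fin N) := Finset.univ.filter fun j => h j = c

/-- Multiplicity of the value `h j`. -/
def mlt (h : Fin N → ℂ) (j : Fin N) : ℕ := (fib h (h j)).card

def Bsum (h : Fin N → ℂ) : ℕ := ∑ c ∈ Finset.univ.image h, ((fib h c).card).choose 2

lemma sum_fiber_decomp (h : Fin N → ℂ) (k : Fin N → ℕ) :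
    ∑ j, k j = ∑ c ∈ Finset.univ.image h, ∑ j ∈ fib h c, k j :=
  (Finset.sum_fiberwise_of_maps_to (fun j _ => Finset.mem_image_of_mem h (Finset.mem_univ j)) k).symm

lemma fib_sum_eq_image (h : Fin N → ℂ) (k : Fin N → ℕ) (c : ℂ)
    (hinj : ∀ j j', h j = h j' → k j = k j' → j = j') :
    ∑ j ∈ fib h c, k j = ∑ x ∈ (fib h c).image k, x := by
  rw [Finset.sum_image]
  intro j hj j' hj' hkk
  simp only [fib, Finset.coe_filter, Set.mem_setOf_eq] at hj hj'
  exact hinj j j' (hj.2.trans hj'.2.symm) hkk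

lemma card_image_fib (h : Fin N → ℂ) (k : Fin N → ℕ) (c : ℂ)
    (hinj : ∀ j j', h j = h j' → k j = k j' → j = j') :
    ((fib h c).image k).card = (fib h c).card := by
  rw [Finset.card_image_of_injOn]
  intro j hj j' hj' hkk
  simp only [fib, Finset.coe_filter, Set.mem_setOf_eq] at hj hj'
  exact hinj j j' (hj.2.trans hj'.2.symm) hkk

lemma Bsum_le_sum (h : Fin N → ℂ) (k : Fin N → ℕ)
    (hinj : ∀ j j', h j = h j' → k j = k j' → j = j') :
    Bsum h ≤ ∑ j, k j := by
  rw [sum_fiber_decomp h k, Bsum]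
  refine Finset.sum_le_sum fun c hc => ?_
  rw [fib_sum_eq_image h k c hinj, ← sum_range_id_eq_choose,
    ← card_image_fib h k c hinj]
  exact range_sum_le _

lemma Bsum_lt_sum (h : Fin N → ℂ) (k : Fin N → ℕ)
    (hinj : ∀ j j', h j = h j' → k j = k j' → j = j')
    (j0 : Fin N) (hj0 : mlt h j0 ≤ k j0) :
    Bsum h < ∑ j, k j := by
  rw [sum_fiber_decomp h k, Bsum]
  refine Finset.sum_lt_sum (fun c hc => ?_) ⟨h j0, Finset.mem_image_of_mem h (Finset.mem_univ j0), ?_⟩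
  · rw [fib_sum_eq_image h k c hinj, ← sum_range_id_eq_choose,
      ← card_image_fib h k c hinj]
    exact range_sum_le _
  · rw [fib_sum_eq_image h _ _ hinj, ← sum_range_id_eq_choose,
      ← card_image_fib h k _ hinj]
    refine range_sum_lt _ (k j0) ?_ ?_
    · exact Finset.mem_image_of_mem k (by simp [fib])
    · rw [card_image_fib h k _ hinj]
      exact hj0

lemma sum_eq_Bsum (h : Fin N → ℂ) (k : Fin N → ℕ)
    (hinj : ∀ j j', h j = h j' → k j = k j' → j = j')
    (hlt : ∀ j, k j < mlt h j) :
    ∑ j, k j = Bsum h := by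
  rw [sum_fiber_decomp h k, Bsum]
  refine Finset.sum_congr rfl fun c hc => ?_
  rw [fib_sum_eq_image h k c hinj, ← sum_range_id_eq_choose]
  have himg : (fib h c).image k = Finset.range ((fib h c).card) := by
    apply Finset.eq_of_subset_of_card_le
    · intro x hx
      obtain ⟨j, hj, rfl⟩ := Finset.mem_image.mp hx
      have hcj : h j = c := by simpa [fib] using hj
      have := hlt j
      rw [mlt, hcj] at this
      simpa using this
    · rw [Finset.card_range, card_image_fib h k c hinj]
  rw [himg]


lemma pairs_card_choose (s : Finset (Fin N)) :
    ((s ×ˢ s).filter fun q : Fin N × Fin N => q.1 < q.2).card = s.card.choose 2 := by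
  classical
  rw [← Finset.card_powersetCard 2 s]
  apply Finset.card_bij (fun q _ => ({q.1, q.2} : Finset (Fin N)))
  · intro q hq
    simp only [Finset.mem_filter, Finset.mem_product] at hq
    rw [Finset.mem_powersetCard]
    constructor
    · intro x hx
      rcases Finset.mem_insert.mp hx with rfl | hx
      · exact hq.1.1
      · rw [Finset.mem_singleton.mp hx]; exact hq.1.2
    · exact Finset.card_pair (ne_of_lt hq.2)
  · intro q hq q' hq' heq
    simp only [Finset.mem_filter, Finset.mem_product] at hq hq'
    have h1 : q.1 ∈ ({q'.1, q'.2} : Finset (Fin N)) := by rw [← heq]; simp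
    have h2 : q.2 ∈ ({q'.1, q'.2} : Finset (Fin N)) := by rw [← heq]; simp
    simp only [Finset.mem_insert, Finset.mem_singleton] at h1 h2
    have hlt := hq.2
    have hlt' := hq'.2
    rcases h1 with e1 | e1 <;> rcases h2 with e2 | e2
    · exact absurd (e1 ▸ e2 ▸ hlt) (lt_irrefl _)
    · exact Prod.ext e1 e2
    · exact absurd (hlt.trans (e2 ▸ hlt'.trans_eq e1.symm)) (lt_irrefl _)
    · exact absurd (e1 ▸ e2 ▸ hlt) (lt_irrefl _)
  · intro t ht
    rw [Finset.mem_powersetCard] at ht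
    obtain ⟨a, b, hab, rfl⟩ := Finset.card_eq_two.mp ht.2
    rcases lt_or_gt_of_ne hab with hlt | hlt
    · refine ⟨(a, b), ?_, rfl⟩
      simp only [Finset.mem_filter, Finset.mem_product]
      exact ⟨⟨ht.1 (by simp), ht.1 (by simp)⟩, hlt⟩
    · refine ⟨(b, a), ?_, ?_⟩
      · simp only [Finset.mem_filter, Finset.mem_product]
        exact ⟨⟨ht.1 (by simp), ht.1 (by simp)⟩, hlt⟩
      · exact Finset.pair_comm b a

lemma card_pairs (h : Fin N → ℂ) :
    (Finset.univ.filter fun q : Fin N × Fin N => q.1 < q.2 ∧ h q.1 = h q.2).card = Bsum h := by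
  classical
  rw [Finset.card_eq_sum_card_fiberwise
    (f := fun q : Fin N × Fin N => h q.1) (t := Finset.univ.image h)
    (fun q _ => Finset.mem_image_of_mem _ (Finset.mem_univ q.1))]
  refine Finset.sum_congr rfl fun c hc => ?_
  have hset : ((Finset.univ.filter fun q : Fin N × Fin N => q.1 < q.2 ∧ h q.1 = h q.2).filter
      fun q => h q.1 = c) = (fib h c ×ˢ fib h c).filter fun q => q.1 < q.2 := by
    ext q
    simp only [Finset.mem_filter, Finset.mem_product, Finset.mem_univ, true_and, fib]
    constructor
    · rintro ⟨⟨hlt, heq⟩, hc1⟩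
      exact ⟨⟨hc1, heq ▸ hc1⟩, hlt⟩
    · rintro ⟨⟨hc1, hc2⟩, hlt⟩
      exact ⟨⟨hlt, hc1.trans hc2.symm⟩, hc1⟩
  rw [hset, pairs_card_choose]


/-! ### Degree bound and top coefficient -/

def wcoef (h : Fin N → ℂ) (p : Fin N → Polynomial ℂ) (j : Fin N) (k : ℕ) : ℂ :=
  if k < mlt h j then (((p j).natDegree.descFactorial k : ℂ)) * (p j).leadingCoeff else 0

lemma coeff_iter_deriv_top (q : Polynomial ℂ) (k : ℕ) (hk : k ≤ q.natDegree) :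
    (Polynomial.derivative^[k] q).coeff (q.natDegree - k)
      = ((q.natDegree.descFactorial k : ℂ)) * q.leadingCoeff := by
  rw [Polynomial.coeff_iterate_derivative]
  have h1 : q.natDegree - k + k = q.natDegree := by omega
  rw [h1, nsmul_eq_mul, Polynomial.coeff_natDegree]

lemma coeff_prod_of_natDegree_le' {ι : Type*} (s : Finset ι) (f : ι → Polynomial ℂ) (n : ι → ℕ)
    (hf : ∀ i ∈ s, (f i).natDegree ≤ n i) :
    (∏ i ∈ s, f i).coeff (∑ i ∈ s, n i) = ∏ i ∈ s, (f i).coeff (n i) := by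
  classical
  induction s using Finset.cons_induction with
  | empty => simp
  | cons a s ha ih =>
    rw [Finset.prod_cons, Finset.sum_cons,
      Polynomial.coeff_mul_add_eq_of_natDegree_le (hf a (Finset.mem_cons_self a s))
        ((Polynomial.natDegree_prod_le s f).trans
          (Finset.sum_le_sum fun i hi => hf i (Finset.mem_cons_of_mem hi))),
      ih fun i hi => hf i (Finset.mem_cons_of_mem hi), Finset.prod_cons]

lemma Vmat_det_injOn (h : Fin N → ℂ) (r : Fin N → ℕ) (hdet : (Vmat h r).det ≠ 0) :
    ∀ j j', h j = h j' → r j = r j' → j = j' := by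
  intro j j' hh hr
  by_contra hne
  exact hdet (Matrix.det_zero_of_column_eq hne fun i => by simp [Vmat, hh, hr])

lemma term_natDegree_le (h : Fin N → ℂ) (p : Fin N → Polynomial ℂ) (r : Fin N → ℕ) :
    ((∏ j, Polynomial.derivative^[r j] (p j)) * Polynomial.C ((Vmat h r).det)).natDegree
      ≤ (∑ j, (p j).natDegree) - Bsum h := by
  classical
  by_cases hdet : (Vmat h r).det = 0
  · simp [hdet]
  have hinj := Vmat_det_injOn h r hdet
  by_cases hbig : ∃ j, (p j).natDegree < r j
  · obtain ⟨j0, hj0⟩ := hbig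
    have hz : Polynomial.derivative^[r j0] (p j0) = 0 :=
      Polynomial.iterate_derivative_eq_zero hj0
    rw [Finset.prod_eq_zero (Finset.mem_univ j0) hz, zero_mul]
    simp
  · push_neg at hbig
    refine (Polynomial.natDegree_mul_le.trans ?_)
    rw [Polynomial.natDegree_C, add_zero]
    refine (Polynomial.natDegree_prod_le _ _).trans ?_
    have h1 : ∀ j ∈ Finset.univ, (Polynomial.derivative^[r j] (p j)).natDegree
        ≤ (p j).natDegree - r j := fun j _ => Polynomial.natDegree_iterate_derivative _ _
    refine (Finset.sum_le_sum h1).trans ?_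
    rw [Finset.sum_tsub_distrib _ fun j _ => hbig j]
    exact Nat.sub_le_sub_left (Bsum_le_sum h r hinj) _

lemma term_coeff (h : Fin N → ℂ) (p : Fin N → Polynomial ℂ) (r : Fin N → ℕ) :
    ((∏ j, Polynomial.derivative^[r j] (p j)) * Polynomial.C ((Vmat h r).det)).coeff
        ((∑ j, (p j).natDegree) - Bsum h)
      = (∏ j, wcoef h p j (r j)) * (Vmat h r).det := by
  classical
  by_cases hdet : (Vmat h r).det = 0
  · simp [hdet]
  have hinj := Vmat_det_injOn h r hdet
  by_cases hbig : ∃ j, (p j).natDegree < r j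
  · obtain ⟨j0, hj0⟩ := hbig
    have hz : Polynomial.derivative^[r j0] (p j0) = 0 :=
      Polynomial.iterate_derivative_eq_zero hj0
    have h₂ : wcoef h p j0 (r j0) = 0 := by
      rw [wcoef]
      split
      · rw [Nat.descFactorial_eq_zero_iff_lt.mpr hj0]; simp
      · rfl
    rw [Finset.prod_eq_zero (Finset.mem_univ j0) hz, zero_mul,
      Finset.prod_eq_zero (Finset.mem_univ j0) h₂, zero_mul, Polynomial.coeff_zero]
  push_neg at hbig
  by_cases hlt : ∀ j, r j < mlt h j
  · have hsum : ∑ j, r j = Bsum h := sum_eq_Bsum h r hinj hlt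
    have hD : (∑ j, (p j).natDegree) - Bsum h = ∑ j, ((p j).natDegree - r j) := by
      rw [Finset.sum_tsub_distrib _ fun j _ => hbig j, hsum]
    rw [Polynomial.coeff_mul_C, hD,
      coeff_prod_of_natDegree_le' _ _ _
        (fun j _ => Polynomial.natDegree_iterate_derivative _ _)]
    congr 1
    refine Finset.prod_congr rfl fun j _ => ?_
    rw [coeff_iter_deriv_top (p j) (r j) (hbig j), wcoef, if_pos (hlt j)]
  · push_neg at hlt
    obtain ⟨j0, hj0⟩ := hlt
    have hstrict := Bsum_lt_sum h r hinj j0 hj0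
    have hsle : ∑ j, r j ≤ ∑ j, (p j).natDegree := Finset.sum_le_sum fun j _ => hbig j
    have hdeg : ((∏ j, Polynomial.derivative^[r j] (p j)) *
        Polynomial.C ((Vmat h r).det)).natDegree < (∑ j, (p j).natDegree) - Bsum h := by
      have hb := Polynomial.natDegree_mul_le
        (p := ∏ j, Polynomial.derivative^[r j] (p j)) (q := Polynomial.C ((Vmat h r).det))
      have hc : (∏ j, Polynomial.derivative^[r j] (p j)).natDegree
          ≤ ∑ j, ((p j).natDegree - r j) :=
        (Polynomial.natDegree_prod_le _ _).trans
          (Finset.sum_le_sum fun j _ => Polynomial.natDegree_iterate_derivative _ _)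
      have he : ∑ j, ((p j).natDegree - r j) = (∑ j, (p j).natDegree) - ∑ j, r j :=
        Finset.sum_tsub_distrib _ fun j _ => hbig j
      have : (∑ j, (p j).natDegree) - ∑ j, r j < (∑ j, (p j).natDegree) - Bsum h := by omega
      rw [Polynomial.natDegree_C] at hb
      omega
    rw [Polynomial.coeff_eq_zero_of_natDegree_lt hdeg]
    have h₂ : wcoef h p j0 (r j0) = 0 := by rw [wcoef, if_neg (not_lt.mpr hj0)]
    rw [Finset.prod_eq_zero (Finset.mem_univ j0) h₂, zero_mul]


lemma gpoly_natDegree_le (h : Fin N → ℂ) (p : Fin N → Polynomial ℂ) :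
    (gpoly h p).natDegree ≤ (∑ j, (p j).natDegree) - Bsum h := by
  rw [gpoly_expand]
  refine Polynomial.natDegree_sum_le_of_forall_le _ _ fun r _ => ?_
  exact term_natDegree_le h p _

def Fmat (h : Fin N → ℂ) (d : Fin N → ℕ) : Matrix (Fin N) (Fin N) ℂ :=
  Matrix.of fun i j : Fin N => ∑ k : Fin N,
    (if (k:ℕ) < mlt h j then (((d j).descFactorial (k:ℕ) : ℂ)) else 0) *
      (((i:ℕ).choose (k:ℕ) : ℂ) * h j ^ ((i:ℕ) - (k:ℕ)))

lemma gpoly_coeff_D (h : Fin N → ℂ) (p : Fin N → Polynomial ℂ) :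
    (gpoly h p).coeff ((∑ j, (p j).natDegree) - Bsum h)
      = (∏ j, (p j).leadingCoeff) * (Fmat h (fun j => (p j).natDegree)).det := by
  classical
  rw [gpoly_expand, Polynomial.finset_sum_coeff]
  have h1 : ∀ r : Fin N → Fin N,
      ((∏ j, Polynomial.derivative^[(r j : ℕ)] (p j)) *
        Polynomial.C ((Vmat h (fun j => (r j : ℕ))).det)).coeff
          ((∑ j, (p j).natDegree) - Bsum h)
      = (∏ j, wcoef h p j (r j)) * (Vmat h (fun j => (r j : ℕ))).det :=
    fun r => term_coeff h p _
  rw [Finset.sum_congr rfl fun r _ => h1 r]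
  have h2 := det_sum_smul (N := N) (R := ℂ)
    (fun j k => wcoef h p j (k : ℕ))
    (fun j k i => ((i:ℕ).choose (k:ℕ) : ℂ) * h j ^ ((i:ℕ) - (k:ℕ)))
  have h3 : ∀ r : Fin N → Fin N,
      Matrix.det (Matrix.of fun i j : Fin N =>
        ((i:ℕ).choose ((r j : ℕ)) : ℂ) * h j ^ ((i:ℕ) - (r j : ℕ)))
      = (Vmat h (fun j => (r j : ℕ))).det := fun r => rfl
  rw [← Finset.sum_congr rfl fun r _ => congrArg (fun z => (∏ j, wcoef h p j (r j)) * z) (h3 r),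
    ← h2]
  -- now LHS is det of the matrix with entries Σ_k wcoef * (choose * pow); factor out leadingCoeff
  have h4 : (Matrix.of fun i j : Fin N => ∑ k : Fin N,
      wcoef h p j (k : ℕ) * (((i:ℕ).choose (k:ℕ) : ℂ) * h j ^ ((i:ℕ) - (k:ℕ))))
      = Matrix.of fun i j : Fin N =>
          (fun j' => (p j').leadingCoeff) j * Fmat h (fun j' => (p j').natDegree) i j := by
    refine Matrix.ext fun i j => ?_
    simp only [Matrix.of_apply, Fmat, Finset.mul_sum]
    refine Finset.sum_congr rfl fun k _ => ?_
    rw [wcoef]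
    split <;> ring
  rw [h4, Matrix.det_mul_row]



/-- The transform `Q ↦ c • Q(X+1) - c₀ • Q`. -/
def Tr (c c₀ : ℂ) (Q : Polynomial ℂ) : Polynomial ℂ :=
  c • (Q.comp (Polynomial.X + 1)) - c₀ • Q

lemma Tr_zero (c c₀ : ℂ) : Tr c c₀ 0 = 0 := by simp [Tr]

lemma natDegree_X_add_one : ((Polynomial.X + 1 : Polynomial ℂ)).natDegree = 1 := by
  simpa using Polynomial.natDegree_X_add_C (1 : ℂ)

lemma comp_lc (Q : Polynomial ℂ) :
    (Q.comp (Polynomial.X + 1)).leadingCoeff = Q.leadingCoeff := by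
  rw [Polynomial.leadingCoeff_comp (by rw [natDegree_X_add_one]; norm_num)]
  have : (Polynomial.X + 1 : Polynomial ℂ).leadingCoeff = 1 := by
    simpa using Polynomial.leadingCoeff_X_add_C (1 : ℂ)
  rw [this, one_pow, mul_one]

lemma comp_natDegree (Q : Polynomial ℂ) :
    (Q.comp (Polynomial.X + 1)).natDegree = Q.natDegree := by
  rw [Polynomial.natDegree_comp, natDegree_X_add_one, mul_one]

lemma comp_ne_zero {Q : Polynomial ℂ} (hQ : Q ≠ 0) : Q.comp (Polynomial.X + 1) ≠ 0 := by
  intro hc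
  apply hQ
  have := comp_lc Q
  rw [hc] at this
  simp only [Polynomial.leadingCoeff_zero] at this
  exact Polynomial.leadingCoeff_eq_zero.mp this.symm

lemma comp_degree (Q : Polynomial ℂ) :
    (Q.comp (Polynomial.X + 1)).degree = Q.degree := by
  by_cases hQ : Q = 0
  · simp [hQ]
  · rw [Polynomial.degree_eq_natDegree hQ, Polynomial.degree_eq_natDegree (comp_ne_zero hQ),
      comp_natDegree]

lemma Tr_degree_le (c c₀ : ℂ) (Q : Polynomial ℂ) : (Tr c c₀ Q).degree ≤ Q.degree := by
  refine (Polynomial.degree_sub_le _ _).trans ?_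
  simp only [sup_le_iff]
  constructor
  · exact (Polynomial.degree_smul_le _ _).trans (le_of_eq (comp_degree Q))
  · exact Polynomial.degree_smul_le _ _

lemma Tr_iterate_degree_le (c c₀ : ℂ) (t : ℕ) (Q : Polynomial ℂ) :
    ((Tr c c₀)^[t] Q).degree ≤ Q.degree := by
  induction t generalizing Q with
  | zero => simp
  | succ t ih =>
    rw [Function.iterate_succ_apply]
    exact (ih _).trans (Tr_degree_le c c₀ Q)

lemma Tr_coeff_natDegree (c c₀ : ℂ) (Q : Polynomial ℂ) :
    (Tr c c₀ Q).coeff Q.natDegree = (c - c₀) * Q.leadingCoeff := by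
  rw [Tr, Polynomial.coeff_sub, Polynomial.coeff_smul, Polynomial.coeff_smul]
  have h1 : (Q.comp (Polynomial.X + 1)).coeff Q.natDegree = Q.leadingCoeff := by
    rw [← comp_natDegree Q, Polynomial.coeff_natDegree, comp_lc]
  rw [h1, Polynomial.coeff_natDegree, smul_eq_mul, smul_eq_mul]
  ring

lemma Tr_injective {c c₀ : ℂ} (hcc : c ≠ c₀) {Q : Polynomial ℂ} (hQ : Tr c c₀ Q = 0) : Q = 0 := by
  by_contra hQ0
  have h1 := Tr_coeff_natDegree c c₀ Q
  rw [hQ, Polynomial.coeff_zero] at h1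
  have := mul_ne_zero (sub_ne_zero.mpr hcc) (Polynomial.leadingCoeff_ne_zero.mpr hQ0)
  exact this h1.symm

lemma Tr_iterate_injective {c c₀ : ℂ} (hcc : c ≠ c₀) (t : ℕ) {Q : Polynomial ℂ}
    (hQ : (Tr c c₀)^[t] Q = 0) : Q = 0 := by
  induction t generalizing Q with
  | zero => simpa using hQ
  | succ t ih =>
    rw [Function.iterate_succ_apply] at hQ
    exact Tr_injective hcc (ih hQ)

lemma Tr_self_degree_lt (c₀ : ℂ) {Q : Polynomial ℂ} (hQ : Q ≠ 0) :
    (Tr c₀ c₀ Q).degree < Q.degree := by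
  by_cases hd : Q.natDegree = 0
  · obtain ⟨a, rfl⟩ : ∃ a, Q = Polynomial.C a := ⟨Q.coeff 0, (Polynomial.eq_C_of_natDegree_eq_zero hd)⟩
    have : Tr c₀ c₀ (Polynomial.C a) = 0 := by simp [Tr]
    rw [this, Polynomial.degree_zero]
    exact (Polynomial.degree_eq_natDegree hQ) ▸ WithBot.bot_lt_coe _
  · have hsub : (Q.comp (Polynomial.X + 1) - Q).degree < Q.degree :=
      (comp_degree Q) ▸ Polynomial.degree_sub_lt (comp_degree Q) (comp_ne_zero hQ) (comp_lc Q)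
    have : Tr c₀ c₀ Q = c₀ • (Q.comp (Polynomial.X + 1) - Q) := by
      rw [Tr, smul_sub]
    rw [this]
    exact lt_of_le_of_lt (Polynomial.degree_smul_le _ _) hsub

lemma Tr_self_iterate_eq_zero (c₀ : ℂ) (n : ℕ) (Q : Polynomial ℂ)
    (hQ : Q.degree < (n : ℕ)) : (Tr c₀ c₀)^[n] Q = 0 := by
  induction n generalizing Q with
  | zero =>
    simp only [Function.iterate_zero_apply]
    exact Polynomial.degree_eq_bot.mp (Nat.WithBot.lt_zero_iff.mp (by exact_mod_cast hQ))
  | succ n ih =>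
    rw [Function.iterate_succ_apply]
    refine ih _ ?_
    by_cases h0 : Q = 0
    · rw [h0, Tr_zero, Polynomial.degree_zero]
      exact WithBot.bot_lt_coe _
    · have h1 : Q.degree ≤ (n : ℕ) := by
        rw [Polynomial.degree_eq_natDegree h0] at hQ ⊢
        exact_mod_cast Nat.lt_succ_iff.mp (by exact_mod_cast hQ)
      exact lt_of_lt_of_le (Tr_self_degree_lt c₀ h0) h1


lemma Tr_eval_nat (c c₀ : ℂ) (Q : Polynomial ℂ) (i : ℕ) :
    (Tr c c₀ Q).eval (i : ℂ) = c * Q.eval ((i+1 : ℕ) : ℂ) - c₀ * Q.eval (i : ℂ) := by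
  rw [Tr, Polynomial.eval_sub, Polynomial.eval_smul, Polynomial.eval_smul, Polynomial.eval_comp]
  push_cast
  simp

/-- Generalized Vandermonde vanishing: a finite combination `∑ c^i R_c(i)` over distinct
nonzero values `c`, with `deg R_c < m c`, vanishing for `∑ m c` consecutive naturals,
forces all `R_c = 0`. -/
lemma GV (s : Finset ℂ) : (∀ c ∈ s, c ≠ 0) → ∀ (m : ℂ → ℕ) (R : ℂ → Polynomial ℂ),
    (∀ c ∈ s, (R c).degree < ((m c : ℕ) : WithBot ℕ)) →
    ∀ Mb : ℕ, (∑ c ∈ s, m c) ≤ Mb →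
    (∀ i : ℕ, i < Mb → (∑ c ∈ s, c ^ i * (R c).eval (i : ℂ)) = 0) →
    ∀ c ∈ s, R c = 0 := by
  classical
  induction s using Finset.cons_induction with
  | empty => intro _ _ _ _ _ _ _ c hc; exact absurd hc (Finset.notMem_empty c)
  | cons c₀ s' hc₀ ih =>
    intro hne m R hdeg Mb hM hz
    have hc₀mem : c₀ ∈ Finset.cons c₀ s' hc₀ := Finset.mem_cons_self c₀ s'
    have hc₀ne : c₀ ≠ 0 := hne c₀ hc₀mem
    have step : ∀ t : ℕ, ∀ i : ℕ, i < Mb - t →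
        (∑ c ∈ Finset.cons c₀ s' hc₀, c ^ i * ((Tr c c₀)^[t] (R c)).eval (i : ℂ)) = 0 := by
      intro t
      induction t with
      | zero =>
        intro i hi
        simpa using hz i (by omega)
      | succ t iht =>
        intro i hi
        have h1 := iht (i+1) (by omega)
        have h2 := iht i (by omega)
        have hexp : ∀ c ∈ Finset.cons c₀ s' hc₀,
            c ^ i * ((Tr c c₀)^[t+1] (R c)).eval (i : ℂ)
              = c ^ (i+1) * ((Tr c c₀)^[t] (R c)).eval ((i+1 : ℕ) : ℂ)
                - c₀ * (c ^ i * ((Tr c c₀)^[t] (R c)).eval (i : ℂ)) := by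
          intro c _
          rw [Function.iterate_succ_apply', Tr_eval_nat]
          ring
        rw [Finset.sum_congr rfl hexp, Finset.sum_sub_distrib, ← Finset.mul_sum, h1, h2]
        ring
    have hR0 : (Tr c₀ c₀)^[m c₀] (R c₀) = 0 :=
      Tr_self_iterate_eq_zero c₀ (m c₀) (R c₀) (hdeg c₀ hc₀mem)
    have hsum_cons : (∑ c ∈ Finset.cons c₀ s' hc₀, m c) = m c₀ + ∑ c ∈ s', m c :=
      Finset.sum_cons hc₀
    have hz' : ∀ i : ℕ, i < Mb - m c₀ →
        (∑ c ∈ s', c ^ i * ((Tr c c₀)^[m c₀] (R c)).eval (i : ℂ)) = 0 := by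
      intro i hi
      have := step (m c₀) i hi
      rw [Finset.sum_cons, hR0] at this
      simpa using this
    have ihs := ih (fun c hc => hne c (Finset.mem_cons_of_mem hc)) m
      (fun c => (Tr c c₀)^[m c₀] (R c))
      (fun c hc => lt_of_le_of_lt (Tr_iterate_degree_le c c₀ (m c₀) (R c))
        (hdeg c (Finset.mem_cons_of_mem hc)))
      (Mb - m c₀) (by omega) hz'
    have hs' : ∀ c ∈ s', R c = 0 := by
      intro c hc
      have hcc : c ≠ c₀ := fun hcc => hc₀ (hcc ▸ hc)
      exact Tr_iterate_injective hcc (m c₀) (ihs c hc)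
    have hz0 : ∀ i : ℕ, i < Mb → (R c₀).eval (i : ℂ) = 0 := by
      intro i hi
      have h3 := hz i hi
      rw [Finset.sum_cons, Finset.sum_eq_zero (fun c hc => by rw [hs' c hc]; simp)] at h3
      have h4 : c₀ ^ i ≠ 0 := pow_ne_zero i hc₀ne
      rw [add_zero] at h3
      exact (mul_eq_zero.mp h3).resolve_left h4
    have hRc₀ : R c₀ = 0 := by
      by_cases h0 : R c₀ = 0
      · exact h0
      have hcard : (((Finset.range Mb).image (fun n : ℕ => (n : ℂ)))).card = Mb := by
        rw [Finset.card_image_of_injective _ Nat.cast_injective, Finset.card_range]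
      refine Polynomial.eq_zero_of_natDegree_lt_card_of_eval_eq_zero' (R c₀)
        ((Finset.range Mb).image (fun n : ℕ => (n : ℂ))) ?_ ?_
      · intro x hx
        obtain ⟨n, hn, rfl⟩ := Finset.mem_image.mp hx
        exact hz0 n (Finset.mem_range.mp hn)
      · rw [hcard]
        have hdeg0 := hdeg c₀ hc₀mem
        rw [Polynomial.degree_eq_natDegree h0] at hdeg0
        have : (R c₀).natDegree < m c₀ := by exact_mod_cast hdeg0
        have hm : m c₀ ≤ Mb := by omega
        omega
    intro c hc
    rcases Finset.mem_cons.mp hc with rfl | hc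
    · exact hRc₀
    · exact hs' c hc


/-! ### Linear independence of descPochhammer polynomials -/

lemma dP_lin_indep (n : ℕ) (w : ℕ → ℂ)
    (hw : (∑ k ∈ Finset.range n, w k • descPochhammer ℂ k) = 0) : ∀ k < n, w k = 0 := by
  induction n with
  | zero => intro k hk; omega
  | succ n ih =>
    have hwn : w n = 0 := by
      have hc := congrArg (fun q : Polynomial ℂ => q.coeff n) hw
      simp only [Polynomial.finset_sum_coeff, Polynomial.coeff_smul, Polynomial.coeff_zero] at hc
      rw [Finset.sum_range_succ] at hc
      have hz : ∀ k ∈ Finset.range n, w k • (descPochhammer ℂ k).coeff n = 0 := by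
        intro k hk
        rw [Polynomial.coeff_eq_zero_of_natDegree_lt]
        · simp
        · rw [descPochhammer_natDegree]
          exact Finset.mem_range.mp hk
      rw [Finset.sum_eq_zero hz, zero_add, smul_eq_mul] at hc
      have hm : (descPochhammer ℂ n).coeff n = 1 := by
        have h1 := (monic_descPochhammer ℂ n).coeff_natDegree
        rwa [descPochhammer_natDegree] at h1
      rw [hm, mul_one] at hc
      exact hc
    refine fun k hk => ?_
    rcases Nat.lt_succ_iff_lt_or_eq.mp hk with hk' | rfl
    · refine ih ?_ k hk'
      rw [Finset.sum_range_succ, hwn, zero_smul, add_zero] at hw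
      exact hw
    · exact hwn

/-! ### The `Q` polynomials and nonvanishing of `det Fmat` -/


def Qp (h : Fin N → ℂ) (d : Fin N → ℕ) (j : Fin N) : Polynomial ℂ :=
  ∑ k ∈ Finset.range (mlt h j),
    (((d j).descFactorial k : ℂ) * ((h j)⁻¹) ^ k * ((k.factorial : ℂ))⁻¹) • descPochhammer ℂ k

lemma mlt_pos (h : Fin N → ℂ) (j : Fin N) : 0 < mlt h j :=
  Finset.card_pos.mpr ⟨j, by simp [fib]⟩

lemma mlt_le (h : Fin N → ℂ) (j : Fin N) : mlt h j ≤ N := by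
  have := Finset.card_filter_le (Finset.univ : Finset (Fin N)) (fun j' => h j' = h j)
  simpa [mlt, fib] using this

lemma Qp_degree_lt (h : Fin N → ℂ) (d : Fin N → ℕ) (j : Fin N) :
    (Qp h d j).degree < ((mlt h j : ℕ) : WithBot ℕ) := by
  refine lt_of_le_of_lt (Polynomial.degree_sum_le _ _) ?_
  rw [Finset.sup_lt_iff (by exact WithBot.bot_lt_coe _)]
  intro k hk
  refine lt_of_le_of_lt (Polynomial.degree_smul_le _ _) ?_
  refine lt_of_le_of_lt (Polynomial.degree_le_natDegree) ?_
  rw [descPochhammer_natDegree]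
  exact_mod_cast Finset.mem_range.mp hk

lemma Qp_eval (h : Fin N → ℂ) (hne : ∀ j, h j ≠ 0) (d : Fin N → ℕ) (j : Fin N) (i : ℕ) :
    h j ^ i * (Qp h d j).eval (i : ℂ)
      = ∑ k ∈ Finset.range (mlt h j),
          ((d j).descFactorial k : ℂ) * ((i.choose k : ℂ) * h j ^ (i - k)) := by
  rw [Qp, Polynomial.eval_finset_sum, Finset.mul_sum]
  refine Finset.sum_congr rfl fun k hk => ?_
  rw [Polynomial.eval_smul, smul_eq_mul]
  rw [descPochhammer_eval_eq_descFactorial ℂ i k]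
  rcases le_or_gt k i with hki | hki
  · have hfac : (i.descFactorial k : ℂ) = (k.factorial : ℂ) * (i.choose k : ℂ) := by
      exact_mod_cast congrArg (fun n : ℕ => (n : ℂ)) (Nat.descFactorial_eq_factorial_mul_choose i k)
    have hpow : h j ^ i = h j ^ (i - k) * h j ^ k := by
      rw [← pow_add]
      congr 1
      omega
    rw [hfac, hpow, inv_pow]
    have h2 : (k.factorial : ℂ) ≠ 0 := by exact_mod_cast Nat.factorial_ne_zero k
    have h4 : h j ^ k ≠ 0 := pow_ne_zero _ (hne j)
    field_simp
  · rw [Nat.descFactorial_eq_zero_iff_lt.mpr hki, Nat.choose_eq_zero_of_lt hki]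
    simp


lemma Fmat_apply (h : Fin N → ℂ) (d : Fin N → ℕ) (i j : Fin N) :
    Fmat h d i j = ∑ k ∈ Finset.range (mlt h j),
      ((d j).descFactorial k : ℂ) * (((i:ℕ).choose k : ℂ) * h j ^ ((i:ℕ) - k)) := by
  rw [Fmat, Matrix.of_apply,
    Fin.sum_univ_eq_sum_range (fun k => (if k < mlt h j then (((d j).descFactorial k : ℂ)) else 0) *
      (((i:ℕ).choose k : ℂ) * h j ^ ((i:ℕ) - k))) N]
  rw [← Finset.sum_subset (Finset.range_subset_range.mpr (mlt_le h j))
    (fun k _ hk => by rw [if_neg (by simpa using hk), zero_mul])]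
  exact Finset.sum_congr rfl fun k hk => by rw [if_pos (Finset.mem_range.mp hk)]

lemma det_Fmat_ne_zero (h : Fin N → ℂ) (hne : ∀ j, h j ≠ 0) (d : Fin N → ℕ)
    (hdd : ∀ j j', j ≠ j' → h j = h j' → d j ≠ d j') :
    (Fmat h d).det ≠ 0 := by
  classical
  intro hdet
  obtain ⟨v, hv0, hmv⟩ := Matrix.exists_mulVec_eq_zero_iff.mpr hdet
  have hQF : ∀ (i : Fin N) (j : Fin N),
      h j ^ (i:ℕ) * (Qp h d j).eval ((i:ℕ) : ℂ) = Fmat h d i j := by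
    intro i j
    rw [Qp_eval h hne, Fmat_apply]
  set s := Finset.univ.image h with hs
  set R : ℂ → Polynomial ℂ := fun c => ∑ j ∈ fib h c, v j • Qp h d j with hR
  have hsumN : (∑ c ∈ s, (fib h c).card) = N := by
    have h1 := Finset.card_eq_sum_card_fiberwise
      (f := h) (s := (Finset.univ : Finset (Fin N))) (t := s)
      (fun j _ => Finset.mem_image_of_mem h (Finset.mem_univ j))
    rw [Finset.card_univ, Fintype.card_fin] at h1
    have h2 : ∑ c ∈ s, (fib h c).card
        = ∑ b ∈ s, (Finset.univ.filter (fun a => h a = b)).card := rfl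
    rw [h2, ← h1]
  have hdegR : ∀ c ∈ s, (R c).degree < (((fib h c).card : ℕ) : WithBot ℕ) := by
    intro c hc
    refine lt_of_le_of_lt (Polynomial.degree_sum_le _ _) ?_
    rw [Finset.sup_lt_iff (WithBot.bot_lt_coe _)]
    intro j hj
    have hjc : h j = c := by simpa [fib] using hj
    refine lt_of_le_of_lt (Polynomial.degree_smul_le _ _) ?_
    have hq := Qp_degree_lt h d j
    rwa [mlt, hjc] at hq
  have hz : ∀ i : ℕ, i < N → (∑ c ∈ s, c ^ i * (R c).eval (i : ℂ)) = 0 := by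
    intro i hi
    have hmv' := congrFun hmv ⟨i, hi⟩
    have hmv2 : (∑ j, Fmat h d ⟨i, hi⟩ j * v j) = 0 := by
      simpa [Matrix.mulVec, dotProduct] using hmv'
    have hsplit := Finset.sum_fiberwise_of_maps_to (g := h) (t := s)
      (fun j (_ : j ∈ (Finset.univ : Finset (Fin N))) =>
        Finset.mem_image_of_mem h (Finset.mem_univ j))
      (fun j => Fmat h d ⟨i, hi⟩ j * v j)
    have hterm : ∀ c ∈ s, c ^ i * (R c).eval (i : ℂ)
        = ∑ j ∈ fib h c, Fmat h d ⟨i, hi⟩ j * v j := by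
      intro c hc
      rw [hR]
      simp only [Polynomial.eval_finset_sum, Polynomial.eval_smul, smul_eq_mul]
      rw [Finset.mul_sum]
      refine Finset.sum_congr rfl fun j hj => ?_
      have hjc : h j = c := by simpa [fib] using hj
      rw [← hjc, ← hQF ⟨i, hi⟩ j]
      simp only [Fin.val_mk]
      ring
    rw [Finset.sum_congr rfl hterm]
    simp only [fib]
    rw [hsplit]
    exact hmv2
  have hall := GV s (fun c hc => by
      obtain ⟨j, _, rfl⟩ := Finset.mem_image.mp hc
      exact hne j)
    (fun c => (fib h c).card) R hdegR N (le_of_eq hsumN) hz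
  obtain ⟨j₀, hj₀⟩ := Function.ne_iff.mp hv0
  simp only [Pi.zero_apply] at hj₀
  have hc₀s : h j₀ ∈ s := Finset.mem_image_of_mem h (Finset.mem_univ j₀)
  have hR0 : R (h j₀) = 0 := hall (h j₀) hc₀s
  set m := (fib h (h j₀)).card with hm
  have hmlt : ∀ j ∈ fib h (h j₀), mlt h j = m := by
    intro j hj
    have hjc : h j = h j₀ := by simpa [fib] using hj
    rw [mlt, hjc]
  have hRw : R (h j₀) = ∑ k ∈ Finset.range m,
      (∑ j ∈ fib h (h j₀), v j *
        (((d j).descFactorial k : ℂ) * ((h j₀)⁻¹) ^ k * ((k.factorial : ℂ))⁻¹)) •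
        descPochhammer ℂ k := by
    show (∑ j ∈ fib h (h j₀), v j • Qp h d j) = _
    have hterm : ∀ j ∈ fib h (h j₀), v j • Qp h d j
        = ∑ k ∈ Finset.range m, (v j *
            (((d j).descFactorial k : ℂ) * ((h j₀)⁻¹) ^ k * ((k.factorial : ℂ))⁻¹)) •
              descPochhammer ℂ k := by
      intro j hj
      have hjc : h j = h j₀ := by simpa [fib] using hj
      rw [Qp, hmlt j hj, hjc, Finset.smul_sum]
      exact Finset.sum_congr rfl fun k _ => by rw [smul_smul]
    rw [Finset.sum_congr rfl hterm, Finset.sum_comm]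
    refine Finset.sum_congr rfl fun k _ => ?_
    rw [Finset.sum_smul]
  have hw := dP_lin_indep m _ (by rw [← hRw]; exact hR0)
  have hwk : ∀ k, k < m → (∑ j ∈ fib h (h j₀), v j * (((d j).descFactorial k : ℂ))) = 0 := by
    intro k hk
    have h1 := hw k hk
    have h2 : ((h j₀)⁻¹) ^ k * ((k.factorial : ℂ))⁻¹ ≠ 0 :=
      mul_ne_zero (pow_ne_zero _ (inv_ne_zero (hne j₀)))
        (inv_ne_zero (by exact_mod_cast Nat.factorial_ne_zero k))
    have h3 : (∑ j ∈ fib h (h j₀), v j *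
        (((d j).descFactorial k : ℂ) * ((h j₀)⁻¹) ^ k * ((k.factorial : ℂ))⁻¹))
        = (∑ j ∈ fib h (h j₀), v j * (((d j).descFactorial k : ℂ))) *
            (((h j₀)⁻¹) ^ k * ((k.factorial : ℂ))⁻¹) := by
      rw [Finset.sum_mul]
      exact Finset.sum_congr rfl fun j _ => by ring
    rw [h3] at h1
    exact (mul_eq_zero.mp h1).resolve_right h2
  -- Vandermonde
  set e := (fib h (h j₀)).equivFin with he
  have hvdm : Function.Injective (fun t : Fin m => ((d ((e.symm t) : Fin N)) : ℂ)) := by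
    intro t t' htt
    by_contra hnett
    have hjne : ((e.symm t) : Fin N) ≠ ((e.symm t') : Fin N) := by
      intro hcoe
      exact hnett (e.symm.injective (Subtype.ext hcoe))
    have hmem : ∀ t'' : Fin m, h ((e.symm t'') : Fin N) = h j₀ := by
      intro t''
      have hmm := (e.symm t'').2
      simp only [fib, Finset.mem_filter] at hmm
      exact hmm.2
    have hhe : h ((e.symm t) : Fin N) = h ((e.symm t') : Fin N) := by
      rw [hmem t, hmem t']
    exact hdd _ _ hjne hhe (Nat.cast_injective htt)
  have hdetV : (Matrix.vandermonde (fun t : Fin m => ((d ((e.symm t) : Fin N)) : ℂ))).det ≠ 0 :=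
    Matrix.det_vandermonde_ne_zero_iff.mpr hvdm
  have hWd := Matrix.det_eval_matrixOfPolynomials_eq_det_vandermonde
    (fun t : Fin m => ((d ((e.symm t) : Fin N)) : ℂ))
    (fun k : Fin m => descPochhammer ℂ (k : ℕ))
    (fun k => descPochhammer_natDegree (R := ℂ) (k : ℕ))
    (fun k => monic_descPochhammer ℂ _)
  have hdetW : (Matrix.of fun t k : Fin m =>
      (descPochhammer ℂ (k : ℕ)).eval ((d ((e.symm t) : Fin N)) : ℂ)).det ≠ 0 := by
    rw [← hWd]
    exact hdetV
  have hvecmul : Matrix.vecMul (fun t : Fin m => v ((e.symm t) : Fin N))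
      (Matrix.of fun t k : Fin m =>
        (descPochhammer ℂ (k : ℕ)).eval ((d ((e.symm t) : Fin N)) : ℂ)) = 0 := by
    funext k
    simp only [Matrix.vecMul, dotProduct, Matrix.of_apply, Pi.zero_apply]
    have hterm : ∀ t : Fin m, v ((e.symm t) : Fin N) *
        (descPochhammer ℂ (k : ℕ)).eval ((d ((e.symm t) : Fin N)) : ℂ)
        = v ((e.symm t) : Fin N) * (((d ((e.symm t) : Fin N)).descFactorial (k:ℕ) : ℂ)) := by
      intro t
      rw [descPochhammer_eval_eq_descFactorial]
    rw [Finset.sum_congr rfl fun t _ => hterm t]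
    have hsum := Equiv.sum_comp e.symm
      (fun x : {x // x ∈ fib h (h j₀)} => v (x : Fin N) * (((d (x : Fin N)).descFactorial (k:ℕ) : ℂ)))
    rw [hsum,
      Finset.sum_coe_sort (fib h (h j₀)) (fun j => v j * (((d j).descFactorial (k:ℕ) : ℂ)))]
    exact hwk (k : ℕ) k.isLt
  have hvz := Matrix.eq_zero_of_vecMul_eq_zero hdetW hvecmul
  have hj₀mem : j₀ ∈ fib h (h j₀) := by simp [fib]
  have := congrFun hvz (e ⟨j₀, hj₀mem⟩)
  simp only [Equiv.symm_apply_apply, Pi.zero_apply] at this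
  exact hj₀ this


lemma mlt_eq_fib_card (h : Fin N → ℂ) (j : Fin N) : mlt h j = (fib h (h j)).card := rfl

lemma gpoly_spec (h : Fin N → ℂ) (hne : ∀ j, h j ≠ 0) (p : Fin N → Polynomial ℂ)
    (hp : ∀ i, p i ≠ 0)
    (hd : ∀ i j, i ≠ j → h i = h j → (p i).natDegree ≠ (p j).natDegree) :
    gpoly h p ≠ 0 ∧ (gpoly h p).natDegree = (∑ j, (p j).natDegree) - Bsum h := by
  have hco : (gpoly h p).coeff ((∑ j, (p j).natDegree) - Bsum h) ≠ 0 := by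
    rw [gpoly_coeff_D]
    exact mul_ne_zero
      (Finset.prod_ne_zero_iff.mpr fun j _ => Polynomial.leadingCoeff_ne_zero.mpr (hp j))
      (det_Fmat_ne_zero h hne _ hd)
  have hne0 : gpoly h p ≠ 0 := fun h0 => hco (by rw [h0]; simp)
  exact ⟨hne0, le_antisymm (gpoly_natDegree_le h p) (Polynomial.le_natDegree_of_ne_zero hco)⟩

end Stmt10
end

/-- Let `V` be spanned by `N` quasi-exponentials `e^{h_i u} p_i(u)` with
`d_i = deg p_i`, such that whenever `h_i = h_j` with `i ≠ j` we have `d_i ≠ d_j`.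
Then `Wr(e^{h₁u}p₁, …, e^{h_Nu}p_N) = e^{(h₁+⋯+h_N)u} g(u)` for a polynomial `g`
of degree exactly `d₁ + ⋯ + d_N − ∑_l C(m_l, 2)`, where `m₁, …, m_l` are the
multiplicities of the distinct values among `h₁, …, h_N`; equivalently,
`∑_l C(m_l, 2)` is the number of pairs `i < j` with `h_i = h_j`. -/
theorem stmt10 {N : ℕ} (h : Fin N → ℂ) (p : Fin N → Polynomial ℂ)
    (hp : ∀ i, p i ≠ 0)
    (hd : ∀ i j, i ≠ j → h i = h j → (p i).natDegree ≠ (p j).natDegree) :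
    ∃ g : Polynomial ℂ, g ≠ 0 ∧
      g.natDegree = (∑ i : Fin N, (p i).natDegree)
          - (Finset.univ.filter fun q : Fin N × Fin N => q.1 < q.2 ∧ h q.1 = h q.2).card ∧
      ∀ u : ℂ, Matrix.det (Matrix.of fun i j : Fin N =>
          iteratedDeriv (i : ℕ) (fun v : ℂ => Complex.exp (h j * v) * (p j).eval v) u)
        = Complex.exp ((∑ i : Fin N, h i) * u) * g.eval u := by
  classical
  obtain ⟨a, ha⟩ := Infinite.exists_notMem_finset (Finset.univ.image fun j : Fin N => -h j)
  have hne : ∀ j, h j + a ≠ 0 := by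
    intro j h0
    exact ha (by
      rw [show a = -h j by linear_combination h0]
      exact Finset.mem_image_of_mem _ (Finset.mem_univ j))
  have hd' : ∀ i j, i ≠ j → (fun j => h j + a) i = (fun j => h j + a) j →
      (p i).natDegree ≠ (p j).natDegree := by
    intro i j hij hh
    exact hd i j hij (by simpa using hh)
  obtain ⟨hg0, hgdeg⟩ := Stmt10.gpoly_spec (fun j => h j + a) hne p hp hd'
  refine ⟨Stmt10.gpoly h p, ?_, ?_, fun u => Stmt10.det_eval h p u⟩
  · rw [← Stmt10.gpoly_shift h p a]
    exact hg0
  · rw [← Stmt10.gpoly_shift h p a, hgdeg]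
    congr 1
    rw [← Stmt10.card_pairs (fun j => h j + a)]
    congr 1
    apply Finset.filter_congr
    intro q _
    simp only [Finset.mem_univ, add_left_inj]
end

section
/- Let f₁, …, f_N be entire functions and t ∈ ℂ. Suppose fᵢ has a zero at u = t of order exactly cᵢ ≥ 0, and the multiset {c₁, …, c_N} has l distinct values with multiplicities m₁, …, m_l. Then the Wronskian Wr(f₁, …, f_N) has a zero at u = t of order at least c₁ + ⋯ + c_N + C(m₁,2) + ⋯ + C(m_l,2) − C(N,2). -/
open Finset

lemma ediff_deriv {g : ℂ → ℂ} (h : Differentiable ℂ g) : Differentiable ℂ (deriv g) :=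
  ((contDiff_infty_iff_deriv.mp (h.contDiff (n := (⊤ : ℕ∞)))).2).differentiable (by simp)

lemma ediff_iter {g : ℂ → ℂ} (h : Differentiable ℂ g) (n : ℕ) :
    Differentiable ℂ (iteratedDeriv n g) := by
  induction n with
  | zero => simpa using h
  | succ n ih => rw [iteratedDeriv_succ]; exact ediff_deriv ih

lemma ehasDeriv_iter {g : ℂ → ℂ} (h : Differentiable ℂ g) (n : ℕ) (u : ℂ) :
    HasDerivAt (iteratedDeriv n g) (iteratedDeriv (n + 1) g u) u := by
  rw [iteratedDeriv_succ]
  exact ((ediff_iter h n) u).hasDerivAt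

lemma ehasDeriv_det {N : ℕ} (f : Fin N → ℂ → ℂ) (hf : ∀ i, Differentiable ℂ (f i))
    (r : Fin N → ℕ) (u : ℂ) :
    HasDerivAt (fun u : ℂ => Matrix.det (Matrix.of fun i j : Fin N => iteratedDeriv (r i) (f j) u))
      (∑ i₀ : Fin N, Matrix.det (Matrix.of fun i j : Fin N =>
        iteratedDeriv (if i = i₀ then r i + 1 else r i) (f j) u)) u := by
  simp only [Matrix.det_apply', Matrix.of_apply]
  have key : ∀ σ : Equiv.Perm (Fin N),
      HasDerivAt (fun u : ℂ => ∏ i, iteratedDeriv (r (σ i)) (f i) u)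
        (∑ j₀ : Fin N, (∏ j ∈ Finset.univ.erase j₀, iteratedDeriv (r (σ j)) (f j) u) •
          iteratedDeriv (r (σ j₀) + 1) (f j₀) u) u :=
    fun σ => HasDerivAt.fun_finsetProd (fun i _ => ehasDeriv_iter (hf i) (r (σ i)) u)
  have total := HasDerivAt.fun_sum (u := Finset.univ)
    (fun σ (_ : σ ∈ Finset.univ) => (key σ).const_mul
      (((Equiv.Perm.sign σ : ℤ) : ℂ)))
  convert total using 1
  case e'_4 => rfl
  case e'_5 => rfl
  rw [Finset.sum_comm]
  refine Finset.sum_congr rfl (fun σ _ => ?_)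
  rw [Finset.mul_sum]
  rw [← Equiv.sum_comp σ (fun i₀ => ((Equiv.Perm.sign σ : ℤ) : ℂ) *
    ∏ i, iteratedDeriv (if σ i = i₀ then r (σ i) + 1 else r (σ i)) (f i) u)]
  refine Finset.sum_congr rfl (fun j₀ _ => ?_)
  congr 1
  rw [smul_eq_mul, mul_comm]
  rw [← Finset.mul_prod_erase Finset.univ
    (fun i => iteratedDeriv (if σ i = σ j₀ then r (σ i) + 1 else r (σ i)) (f i) u)
    (Finset.mem_univ j₀)]
  congr 1
  · simp
  · refine Finset.prod_congr rfl (fun j hj => ?_)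
    rw [if_neg (fun h => (Finset.mem_erase.mp hj).1 (σ.injective h))]

lemma comb_bound {N : ℕ} (c s : Fin N → ℕ) (hinj : Function.Injective s)
    (hle : ∀ i, c i ≤ s i) :
    (∑ i, c i) +
      (Finset.univ.filter fun q : Fin N × Fin N => q.1 < q.2 ∧ c q.1 = c q.2).card
      ≤ ∑ i, s i := by
  have hcard : (Finset.univ.filter fun q : Fin N × Fin N => q.1 < q.2 ∧ c q.1 = c q.2).card
      = (Finset.univ.filter fun q : Fin N × Fin N => c q.1 = c q.2 ∧ s q.2 < s q.1).card := by
    refine Finset.card_bij' (fun q _ => if s q.2 < s q.1 then q else q.swap)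
      (fun q _ => if q.1 < q.2 then q else q.swap) ?_ ?_ ?_ ?_
    · intro q hq
      simp only [Finset.mem_filter, Finset.mem_univ, true_and] at hq ⊢
      have hne : s q.1 ≠ s q.2 := fun h => (hq.1.ne) (hinj h)
      rcases lt_or_gt_of_ne hne with h | h
      · rw [if_neg (by omega)]; exact ⟨hq.2.symm, h⟩
      · rw [if_pos h]; exact ⟨hq.2, h⟩
    · intro q hq
      simp only [Finset.mem_filter, Finset.mem_univ, true_and] at hq ⊢
      have hne : q.1 ≠ q.2 := fun h => absurd (h ▸ hq.2) (lt_irrefl _)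
      rcases lt_or_gt_of_ne hne with h | h
      · rw [if_pos h]; exact ⟨h, hq.1⟩
      · rw [if_neg (by omega)]; exact ⟨h, hq.1.symm⟩
    · intro q hq
      simp only [Finset.mem_filter, Finset.mem_univ, true_and] at hq
      by_cases h : s q.2 < s q.1
      · rw [if_pos h, if_pos hq.1]
      · rw [if_neg h]
        have h2 : ¬ (q.swap.1 < q.swap.2) := by
          simp only [Prod.fst_swap, Prod.snd_swap]; omega
        rw [if_neg h2, Prod.swap_swap]
    · intro q hq
      simp only [Finset.mem_filter, Finset.mem_univ, true_and] at hq
      by_cases h : q.1 < q.2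
      · rw [if_pos h, if_pos hq.2]
      · rw [if_neg h]
        have h2 : ¬ (s q.swap.2 < s q.swap.1) := by
          simp only [Prod.fst_swap, Prod.snd_swap]; omega
        rw [if_neg h2, Prod.swap_swap]
  rw [hcard, Finset.card_filter, Fintype.sum_prod_type, ← Finset.sum_add_distrib]
  refine Finset.sum_le_sum (fun a _ => ?_)
  dsimp only
  have hla := hle a
  have hbound : (∑ b : Fin N, if c a = c b ∧ s b < s a then 1 else 0)
      ≤ s a - c a := by
    rw [← Finset.card_filter]
    calc (Finset.univ.filter fun b => c a = c b ∧ s b < s a).card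
        ≤ (Finset.Ico (c a) (s a)).card := by
          refine Finset.card_le_card_of_injOn s ?_ ?_
          · intro b hb
            simp only [Finset.mem_coe, Finset.mem_filter, Finset.mem_univ, true_and] at hb
            exact Finset.mem_Ico.mpr ⟨hb.1 ▸ hle b, hb.2⟩
          · exact fun x _ y _ h => hinj h
      _ = s a - c a := Nat.card_Ico _ _
  omega

lemma det_vanish {N : ℕ} (f : Fin N → ℂ → ℂ) (t : ℂ) (c : Fin N → ℕ)
    (hc : ∀ i, ∀ k < c i, iteratedDeriv k (f i) t = 0) (r : Fin N → ℕ)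
    (hlt : (∑ i, (r i : ℤ)) < (∑ i : Fin N, (c i : ℤ)) +
      ((Finset.univ.filter fun q : Fin N × Fin N => q.1 < q.2 ∧ c q.1 = c q.2).card : ℤ)) :
    Matrix.det (Matrix.of fun i j : Fin N => iteratedDeriv (r i) (f j) t) = 0 := by
  by_cases hinj : Function.Injective r
  · rw [Matrix.det_apply']
    refine Finset.sum_eq_zero (fun σ _ => ?_)
    by_cases hall : ∀ i, c i ≤ r (σ i)
    · exfalso
      have hb := comb_bound c (r ∘ σ) (hinj.comp σ.injective) hall
      have hs : ∑ i, (r ∘ σ) i = ∑ i, r i := Equiv.sum_comp σ r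
      rw [hs] at hb
      have h1 : ((∑ i, c i : ℕ) : ℤ) = ∑ i : Fin N, (c i : ℤ) := by push_cast; rfl
      have h2 : ((∑ i, r i : ℕ) : ℤ) = ∑ i : Fin N, (r i : ℤ) := by push_cast; rfl
      omega
    · push_neg at hall
      obtain ⟨i, hi⟩ := hall
      rw [Finset.prod_eq_zero (Finset.mem_univ i) (by
        simpa using hc i _ hi), mul_zero]
  · simp only [Function.Injective, not_forall] at hinj
    obtain ⟨i, j, hij, hne⟩ := hinj
    exact Matrix.det_zero_of_row_eq hne (by funext j'; simp [hij])

lemma iter_sum {M : ℕ} (k : ℕ) (g : Fin M → ℂ → ℂ) (hg : ∀ i, Differentiable ℂ (g i)) :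
    iteratedDeriv k (fun u => ∑ i, g i u) = fun u => ∑ i, iteratedDeriv k (g i) u := by
  induction k generalizing g with
  | zero => simp
  | succ k ih =>
    rw [iteratedDeriv_succ']
    have hd : deriv (fun u => ∑ i, g i u) = fun u => ∑ i, deriv (g i) u := by
      funext u
      exact deriv_fun_sum (fun i _ => (hg i).differentiableAt)
    rw [hd, ih (fun i => deriv (g i)) (fun i => ediff_deriv (hg i))]
    funext u
    exact Finset.sum_congr rfl (fun i _ => by rw [← iteratedDeriv_succ'])

lemma main_aux {N : ℕ} (f : Fin N → ℂ → ℂ) (hf : ∀ i, Differentiable ℂ (f i))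
    (t : ℂ) (c : Fin N → ℕ)
    (hc : ∀ i, ∀ k < c i, iteratedDeriv k (f i) t = 0) :
    ∀ k : ℕ, ∀ r : Fin N → ℕ,
      ((k : ℤ) + ∑ i, (r i : ℤ) < (∑ i : Fin N, (c i : ℤ)) +
        ((Finset.univ.filter fun q : Fin N × Fin N => q.1 < q.2 ∧ c q.1 = c q.2).card : ℤ)) →
      iteratedDeriv k
        (fun u : ℂ => Matrix.det (Matrix.of fun i j : Fin N => iteratedDeriv (r i) (f j) u))
        t = 0 := by
  intro k
  induction k with
  | zero =>
    intro r hr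
    rw [iteratedDeriv_zero]
    exact det_vanish f t c hc r (by push_cast at hr ⊢; linarith)
  | succ k ih =>
    intro r hr
    rw [iteratedDeriv_succ']
    have hd : deriv (fun u : ℂ =>
        Matrix.det (Matrix.of fun i j : Fin N => iteratedDeriv (r i) (f j) u)) =
        fun u => ∑ i₀ : Fin N, (fun u : ℂ => Matrix.det (Matrix.of fun i j : Fin N =>
          iteratedDeriv ((fun i => if i = i₀ then r i + 1 else r i) i) (f j) u)) u := by
      funext u
      exact (ehasDeriv_det f hf r u).deriv
    rw [hd, iter_sum k _ (fun i₀ => fun u => (ehasDeriv_det f hf _ u).differentiableAt)]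
    refine Finset.sum_eq_zero (fun i₀ _ => ih _ ?_)
    have hsum : ∑ i, ((if i = i₀ then r i + 1 else r i : ℕ) : ℤ)
        = (∑ i, (r i : ℤ)) + 1 := by
      have : ∀ i : Fin N, ((if i = i₀ then r i + 1 else r i : ℕ) : ℤ)
          = (r i : ℤ) + (if i = i₀ then 1 else 0) := by
        intro i; split <;> simp
      rw [Finset.sum_congr rfl (fun i _ => this i), Finset.sum_add_distrib,
        Finset.sum_ite_eq' Finset.univ i₀ (fun _ => (1 : ℤ))]
      simp
    rw [hsum]
    push_cast at hr ⊢
    linarith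


/-- Let `f₁, …, f_N` be entire functions such that `f_i` has a zero at `u = t` of
order exactly `c_i ≥ 0`, and suppose the multiset `{c₁, …, c_N}` has distinct
values with multiplicities `m₁, …, m_l`.  Then the Wronskian `Wr(f₁, …, f_N)` has
a zero at `u = t` of order at least
`c₁ + ⋯ + c_N + ∑_l C(m_l, 2) − C(N, 2)`; here `∑_l C(m_l, 2)` equals the number
of pairs `i < j` with `c_i = c_j`. -/
theorem stmt11 {N : ℕ} (f : Fin N → ℂ → ℂ) (hf : ∀ i, Differentiable ℂ (f i))
    (t : ℂ) (c : Fin N → ℕ)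
    (hc : ∀ i, (∀ k < c i, iteratedDeriv k (f i) t = 0) ∧ iteratedDeriv (c i) (f i) t ≠ 0) :
    ∀ k : ℕ, (k : ℤ) < (∑ i : Fin N, (c i : ℤ))
        + ((Finset.univ.filter fun q : Fin N × Fin N => q.1 < q.2 ∧ c q.1 = c q.2).card : ℤ)
        - (Nat.choose N 2 : ℤ) →
      iteratedDeriv k
        (fun u : ℂ => Matrix.det (Matrix.of fun i j : Fin N => iteratedDeriv (i : ℕ) (f j) u))
        t = 0 := by
  intro k hk
  have hr : ∑ i : Fin N, ((i : ℕ) : ℤ) = (Nat.choose N 2 : ℤ) := by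
    have h1 : ∑ i : Fin N, (i : ℕ) = ∑ i ∈ Finset.range N, i :=
      Fin.sum_univ_eq_sum_range (fun i => i) N
    have h2 : (∑ i ∈ Finset.range N, i) * 2 = N * (N - 1) := Finset.sum_range_id_mul_two N
    have h3 : Nat.choose N 2 = N * (N - 1) / 2 := Nat.choose_two_right N
    have h4 : ∑ i : Fin N, ((i : ℕ) : ℤ) = ((∑ i : Fin N, (i : ℕ) : ℕ) : ℤ) := by push_cast; rfl
    rw [h4]
    have : ∑ i : Fin N, (i : ℕ) = Nat.choose N 2 := by omega
    rw [this]
  exact main_aux f hf t c (fun i => (hc i).1) k (fun i => (i : ℕ)) (by rw [hr]; omega)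
end

section
/- Let c > 0 and let B be the infinite lower-triangular matrix representing multiplication by e^{cu} on formal power series in the basis (u^i/i!)_{i≥0}, i.e. B_{i,j} = C(i,j) c^{i−j} for i ≥ j and B_{i,j} = 0 otherwise. Then B is triangularly totally positive: for every m and all indices i₁ < ⋯ < i_m and j₁ < ⋯ < j_m with i₁ ≥ j₁, …, i_m ≥ j_m, the minor det(B_{i_a, j_b})_{1≤a,b≤m} is strictly positive. -/
open Matrix Finset

lemma sum_det_updateCol {m : ℕ} (M : Matrix (Fin m) (Fin m) ℝ) (g : Fin m → ℝ) :
    ∑ b, (M.updateCol b (fun a => g a * M a b)).det = (∑ a, g a) * M.det := by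
  simp only [Matrix.det_apply, Matrix.updateCol_apply, Finset.mul_sum]
  rw [Finset.sum_comm]
  refine Finset.sum_congr rfl fun σ _ => ?_
  have h1 : ∀ b : Fin m, (∏ x, (if x = b then g (σ x) * M (σ x) b else M (σ x) x))
      = g (σ b) * ∏ x, M (σ x) x := by
    intro b
    rw [show (fun x => if x = b then g (σ x) * M (σ x) b else M (σ x) x)
        = fun x => (if x = b then g (σ x) else 1) * M (σ x) x by
      funext x; by_cases h : x = b <;> simp [h]]
    rw [Finset.prod_mul_distrib, Finset.prod_ite_eq' Finset.univ b (fun x => g (σ x))]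
    simp
  simp only [h1]
  rw [← Finset.smul_sum, ← Finset.sum_mul, Equiv.sum_comp σ g]
  rw [mul_smul_comm]

lemma det_eq_zero_of_block {m : ℕ} (M : Matrix (Fin m) (Fin m) ℝ) (b : Fin m)
    (h : ∀ a b' : Fin m, a ≤ b → b ≤ b' → M a b' = 0) : M.det = 0 := by
  rw [Matrix.det_apply]
  refine Finset.sum_eq_zero fun σ _ => ?_
  obtain ⟨b', hb', hσ⟩ : ∃ b', b ≤ b' ∧ σ b' ≤ b := by
    by_contra hcon
    push_neg at hcon
    have hcard : (Finset.Ici b).card ≤ (Finset.Ioi b).card := by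
      apply Finset.card_le_card_of_injOn σ
      · intro x hx; exact Finset.mem_Ioi.2 (hcon x (Finset.mem_Ici.1 hx))
      · exact fun x _ y _ hxy => σ.injective hxy
    rw [Fin.card_Ici, Fin.card_Ioi] at hcard
    have := b.isLt
    omega
  have hz : (∏ x, M (σ x) x) = 0 :=
    Finset.prod_eq_zero (Finset.mem_univ b') (h (σ b') b' hσ hb')
  rw [hz, smul_zero]

lemma choose_real (n k : ℕ) :
    ((n:ℝ) - k) * (n.choose k : ℝ) = ((k:ℝ)+1) * (n.choose (k+1) : ℝ) := by
  rcases le_or_gt k n with h | h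
  · have := Nat.choose_succ_right_eq n k
    have hcast : ((n.choose (k+1) : ℝ)) * ((k:ℝ)+1) = (n.choose k : ℝ) * ((n:ℝ) - k) := by
      have := congrArg (fun x : ℕ => (x : ℝ)) this
      push_cast [Nat.cast_sub h] at this
      linarith [this]
    linarith [hcast]
  · rw [Nat.choose_eq_zero_of_lt h, Nat.choose_eq_zero_of_lt (h.trans (Nat.lt_succ_self k))]
    simp

lemma pascal_minor_pos (n : ℕ) : ∀ {m : ℕ} (i j : Fin m → ℕ),
    (∑ a, (i a - j a)) = n → StrictMono i → StrictMono j → (∀ a, j a ≤ i a) →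
    0 < (Matrix.of fun a b : Fin m => (Nat.choose (i a) (j b) : ℝ)).det := by
  induction n using Nat.strong_induction_on with
  | _ n IH =>
  intro m i j hS hi hj hij
  set M : Matrix (Fin m) (Fin m) ℝ :=
    Matrix.of fun a b => (Nat.choose (i a) (j b) : ℝ) with hM
  by_cases h0 : n = 0
  · subst h0
    have hije : ∀ a, i a = j a := by
      intro a
      have := Finset.sum_eq_zero_iff.mp hS a (Finset.mem_univ a)
      have h2 := hij a
      omega
    have htri : M.BlockTriangular OrderDual.toDual := by
      intro a b hab
      have hab' : a < b := hab
      have : i a < j b := by rw [hije a]; exact hj hab'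
      simp [hM, Matrix.of_apply, Nat.choose_eq_zero_of_lt this]
    rw [Matrix.det_of_lowerTriangular _ htri]
    have hd : ∀ a : Fin m, M a a = 1 := by
      intro a; simp [hM, Matrix.of_apply, hije a]
    rw [Finset.prod_congr rfl (fun a _ => hd a)]
    simp
  -- inductive step
  have key : ∑ b, (((j b : ℝ))+1) *
      (M.updateCol b (fun a => (Nat.choose (i a) (j b + 1) : ℝ))).det
      = (n:ℝ) * M.det := by
    have step1 : ∀ b : Fin m,
        (((j b : ℝ))+1) * (M.updateCol b (fun a => (Nat.choose (i a) (j b + 1) : ℝ))).det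
        = (M.updateCol b (fun a => (i a : ℝ) * M a b)).det
          + (M.updateCol b ((-(j b : ℝ)) • (fun a => M a b))).det := by
      intro b
      rw [← Matrix.det_updateCol_smul, ← Matrix.det_updateCol_add]
      have hfun : ((((j b : ℝ))+1) • fun a => (Nat.choose (i a) (j b + 1) : ℝ))
          = (fun a => (i a : ℝ) * M a b) + ((-(j b : ℝ)) • (fun a => M a b)) := by
        funext a
        have hc := (choose_real (i a) (j b)).symm
        simp only [Pi.smul_apply, Pi.add_apply, smul_eq_mul, hM, Matrix.of_apply]
        rw [hc]
        ring
      rw [hfun]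
    simp only [step1]
    rw [Finset.sum_add_distrib]
    rw [sum_det_updateCol M (fun a => (i a : ℝ))]
    have h2 : ∀ b : Fin m, (M.updateCol b ((-(j b : ℝ)) • (fun a => M a b))).det
        = (-(j b : ℝ)) * M.det := by
      intro b
      rw [Matrix.det_updateCol_smul, Matrix.updateCol_eq_self]
    rw [Finset.sum_congr rfl (fun b _ => h2 b), ← Finset.sum_mul]
    rw [← add_mul]
    congr 1
    have : (n:ℝ) = ∑ a, ((i a : ℝ) - (j a : ℝ)) := by
      rw [← hS]
      push_cast
      rw [Finset.sum_congr rfl (fun a _ => by rw [Nat.cast_sub (hij a)])]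
    rw [this, Finset.sum_sub_distrib, Finset.sum_neg_distrib]
    ring
  have hzero1 : ∀ b : Fin m, i b = j b →
      (M.updateCol b (fun a => (Nat.choose (i a) (j b + 1) : ℝ))).det = 0 := by
    intro b hb
    apply det_eq_zero_of_block _ b
    intro a b' ha hb'
    by_cases h : b' = b
    · subst h
      have h1 : i a ≤ i b' := hi.monotone ha
      have : i a < j b' + 1 := by omega
      simp [Matrix.updateCol_apply, Nat.choose_eq_zero_of_lt this]
    · have hlt : b < b' := lt_of_le_of_ne hb' (Ne.symm h)
      have h1 : i a ≤ i b := hi.monotone ha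
      have h2 : j b < j b' := hj hlt
      have : i a < j b' := by omega
      simp [Matrix.updateCol_apply, h, Nat.choose_eq_zero_of_lt this, hM]
  have hzero2 : ∀ b c : Fin m, b < c → j c = j b + 1 →
      (M.updateCol b (fun a => (Nat.choose (i a) (j b + 1) : ℝ))).det = 0 := by
    intro b c hbc hjc
    apply Matrix.det_zero_of_column_eq (ne_of_lt hbc)
    intro a
    simp [Matrix.updateCol_apply, (ne_of_gt hbc : c ≠ b), hM, hjc]
  have hpos : ∀ b : Fin m, j b < i b → (∀ c, b < c → j c ≠ j b + 1) →
      0 < (M.updateCol b (fun a => (Nat.choose (i a) (j b + 1) : ℝ))).det := by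
    intro b h1 h2
    set j' := Function.update j b (j b + 1) with hj'
    have hupd : M.updateCol b (fun a => (Nat.choose (i a) (j b + 1) : ℝ))
        = Matrix.of fun a b' => (Nat.choose (i a) (j' b') : ℝ) := by
      ext a b'
      by_cases h : b' = b
      · subst h; simp [Matrix.updateCol_apply, hj', Function.update_self]
      · simp [Matrix.updateCol_apply, h, hj', Function.update_of_ne h, hM]
    rw [hupd]
    have e4 : j' b = j b + 1 := by rw [hj', Function.update_self]
    have hsum : (∑ a, (i a - j' a)) + 1 = n := by
      have e1 : (∑ a ∈ Finset.univ.erase b, (i a - j' a)) + (i b - j' b)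
          = ∑ a, (i a - j' a) := Finset.sum_erase_add _ _ (Finset.mem_univ b)
      have e2 : (∑ a ∈ Finset.univ.erase b, (i a - j a)) + (i b - j b)
          = ∑ a, (i a - j a) := Finset.sum_erase_add _ _ (Finset.mem_univ b)
      have e3 : ∑ a ∈ Finset.univ.erase b, (i a - j' a)
          = ∑ a ∈ Finset.univ.erase b, (i a - j a) := by
        refine Finset.sum_congr rfl fun a ha => ?_
        rw [hj', Function.update_of_ne (Finset.ne_of_mem_erase ha)]
      omega
    have hmono : StrictMono j' := by
      intro a c hac
      rcases eq_or_ne a b with rfl | ha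
      · have hcb : j c ≠ j a + 1 := h2 c hac
        have hlt : j a < j c := hj hac
        rw [e4, hj', Function.update_of_ne (ne_of_gt hac)]
        omega
      · rw [hj', Function.update_of_ne ha]
        rcases eq_or_ne c b with rfl | hc
        · rw [Function.update_self]
          have : j a < j c := hj hac
          omega
        · rw [Function.update_of_ne hc]; exact hj hac
    have hle : ∀ a, j' a ≤ i a := by
      intro a
      rcases eq_or_ne a b with rfl | ha
      · rw [e4]; omega
      · rw [hj', Function.update_of_ne ha]; exact hij a
    exact IH (∑ a, (i a - j' a)) (by omega) i j' rfl hi hmono hle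
  -- combine
  have hne : (Finset.univ.filter (fun a : Fin m => j a < i a)).Nonempty := by
    by_contra hcon
    rw [Finset.not_nonempty_iff_eq_empty, Finset.filter_eq_empty_iff] at hcon
    have : ∑ a, (i a - j a) = 0 := Finset.sum_eq_zero fun a _ => by
      have := hcon (Finset.mem_univ a); omega
    omega
  set b₀ := (Finset.univ.filter (fun a : Fin m => j a < i a)).max' hne with hb₀
  have hb₀mem : j b₀ < i b₀ := by
    have := Finset.max'_mem _ hne
    rw [← hb₀] at this
    exact (Finset.mem_filter.mp this).2
  have hb₀max : ∀ c, b₀ < c → j c ≠ j b₀ + 1 := by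
    intro c hc hjc
    have hcnot : ¬ (j c < i c) := by
      intro hmem
      have := Finset.le_max' (Finset.univ.filter (fun a : Fin m => j a < i a)) c
        (Finset.mem_filter.mpr ⟨Finset.mem_univ c, hmem⟩)
      rw [← hb₀] at this
      exact absurd hc (not_lt.mpr this)
    have hic : i c = j c := by have := hij c; omega
    have : i b₀ < i c := hi hc
    omega
  have hsumpos : 0 < ∑ b, (((j b : ℝ))+1) *
      (M.updateCol b (fun a => (Nat.choose (i a) (j b + 1) : ℝ))).det := by
    apply Finset.sum_pos'
    · intro b _
      rcases eq_or_lt_of_le (hij b) with heq | hlt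
      · rw [hzero1 b heq.symm, mul_zero]
      · by_cases hdup : ∃ c, b < c ∧ j c = j b + 1
        · obtain ⟨c, hc1, hc2⟩ := hdup
          rw [hzero2 b c hc1 hc2, mul_zero]
        · push_neg at hdup
          have := hpos b hlt hdup
          positivity
    · refine ⟨b₀, Finset.mem_univ b₀, ?_⟩
      have := hpos b₀ hb₀mem hb₀max
      positivity
  rw [key] at hsumpos
  have hn : (0:ℝ) < n := by exact_mod_cast Nat.pos_of_ne_zero h0
  nlinarith [hsumpos, hn]

/-- Let `c > 0` and let `B` be the infinite lower-triangular matrix representing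
multiplication by `e^{cu}` on formal power series in the basis `(u^i / i!)`, i.e.
`B i j = C(i, j) c^{i-j}` for `i ≥ j` and `0` otherwise (note `C(i, j) = 0` when
`i < j`, so the formula below covers both cases).  Then `B` is triangularly
totally positive: for all strictly increasing row indices `i₁ < ⋯ < i_m` and
column indices `j₁ < ⋯ < j_m` with `i_a ≥ j_a` for all `a`, the minor
`det (B (i_a) (j_b))` is strictly positive. -/
theorem stmt12 (c : ℝ) (hc : 0 < c) (m : ℕ) (i j : Fin m → ℕ)
    (hi : StrictMono i) (hj : StrictMono j) (hij : ∀ a, j a ≤ i a) :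
    0 < Matrix.det (Matrix.of fun a b : Fin m =>
        (Nat.choose (i a) (j b) : ℝ) * c ^ (i a - j b)) := by
  have hentry : (Matrix.of fun a b : Fin m =>
      (Nat.choose (i a) (j b) : ℝ) * c ^ (i a - j b))
      = Matrix.of fun a b : Fin m => (c ^ (i a)) *
          ((Matrix.of fun a b : Fin m =>
            ((c ^ (j b))⁻¹ * (Nat.choose (i a) (j b) : ℝ))) a b) := by
    ext a b
    simp only [Matrix.of_apply]
    rcases le_or_gt (j b) (i a) with h | h
    · rw [pow_sub₀ c (ne_of_gt hc) h]
      ring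
    · rw [Nat.choose_eq_zero_of_lt h]
      ring
  rw [hentry, Matrix.det_mul_column]
  have hrow : (Matrix.of fun a b : Fin m =>
      ((c ^ (j b))⁻¹ * (Nat.choose (i a) (j b) : ℝ)))
      = Matrix.of fun a b : Fin m => (fun b : Fin m => (c ^ (j b))⁻¹) b *
          ((Matrix.of fun a b : Fin m => (Nat.choose (i a) (j b) : ℝ)) a b) := rfl
  rw [hrow, Matrix.det_mul_row]
  have h1 : 0 < ∏ a, c ^ (i a) := Finset.prod_pos fun a _ => pow_pos hc _
  have h2 : 0 < ∏ b, (c ^ (j b))⁻¹ :=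
    Finset.prod_pos fun b _ => inv_pos.2 (pow_pos hc _)
  have h3 := pascal_minor_pos (∑ a, (i a - j a)) i j rfl hi hj hij
  positivity
end

section
/- Let K ⊆ L be finite sets, σ ∈ S_L a permutation of L acting on (ℂ^N)^{⊗L} by permuting tensor factors, and h an N × N matrix. Let h^{(S)} denote the diagonal action of h on the tensor factors indexed by S. Then the partial trace over the factors in L∖K satisfies Tr_{L∖K}(h^{(L)} ∘ σ) = h^{(K)} ∘ Tr_{L∖K}(h^{(L∖K)} ∘ σ) as operators on (ℂ^N)^{⊗K}. -/
/-- Let `K ⊆ L` be finite sets (modelled as `L = K ⊕ M`, with `M = L ∖ K`), let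
`σ ∈ S_L` act on `(ℂ^N)^{⊗L}` by permuting tensor factors, and let `h^{(S)}` be
the diagonal action of an `N × N` matrix `h` on the tensor factors indexed by `S`.
Identifying operators on `(ℂ^N)^{⊗L}` with matrices indexed by `L → Fin N` (so
that `h^{(L)} ∘ σ` has entries `∏_{k∈L} h (φ k) (ψ (σ⁻¹ k))`, and `h^{(M)} ∘ σ`
has entries `∏_{k∈M} h (φ k) (ψ (σ⁻¹ k)) · ∏_{k∈K} δ_{φ k, ψ (σ⁻¹ k)}`), the
partial trace over the factors in `M = L ∖ K` satisfies
`Tr_{L∖K}(h^{(L)} ∘ σ) = h^{(K)} ∘ Tr_{L∖K}(h^{(L∖K)} ∘ σ)`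
as operators on `(ℂ^N)^{⊗K}`. -/
theorem stmt15 {N : ℕ} (K M : Type*) [Fintype K] [Fintype M]
    [DecidableEq K] [DecidableEq M]
    (σ : Equiv.Perm (K ⊕ M)) (h : Matrix (Fin N) (Fin N) ℂ) :
    (Matrix.of fun a b : K → Fin N => ∑ g : M → Fin N,
        ∏ k : K ⊕ M, h (Sum.elim a g k) (Sum.elim b g (σ.symm k)))
      = (Matrix.of fun a b : K → Fin N => ∏ k : K, h (a k) (b k))
        * (Matrix.of fun a b : K → Fin N => ∑ g : M → Fin N,
            (∏ k : M, h (g k) (Sum.elim b g (σ.symm (Sum.inr k))))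
              * ∏ k : K, (if a k = Sum.elim b g (σ.symm (Sum.inl k)) then (1 : ℂ) else 0)) := by
  ext a b
  simp only [Matrix.mul_apply, Matrix.of_apply]
  simp only [Finset.mul_sum]
  rw [Finset.sum_comm]
  refine Finset.sum_congr rfl fun g _ => ?_
  rw [Fintype.prod_sum_type]
  rw [Finset.sum_eq_single (fun k => Sum.elim b g (σ.symm (Sum.inl k)))]
  · simp [mul_comm]
  · intro c _ hc
    obtain ⟨k, hk⟩ : ∃ k, c k ≠ Sum.elim b g (σ.symm (Sum.inl k)) := by
      by_contra h'; push_neg at h'; exact hc (funext h')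
    have hz : (∏ k : K, if c k = Sum.elim b g (σ.symm (Sum.inl k)) then (1:ℂ) else 0) = 0 :=
      Finset.prod_eq_zero (Finset.mem_univ k) (if_neg hk)
    rw [hz]; ring
  · intro h'; exact absurd (Finset.mem_univ _) h'
end

section
/- Let N ≥ 1 and let V be an N-dimensional space of N-times continuously differentiable functions with basis f₁, …, f_N, and let g be N-times differentiable. Define D_V(g) = Wr(f₁, …, f_N, g) / Wr(f₁, …, f_N) at a point t where Wr(f₁, …, f_N)(t) ≠ 0. Then D_V(g)(t) = Σ_{i=0}^{N} (−1)^i (Δ_{(1^i)}(t) / Δ_∅(t)) · g^{(N−i)}(t), where Δ_{(1^i)}(t) = (−1)^{C(N,2)} det(f_j^{(λ_a + N − a)}(t))_{1≤a,j≤N} is the Plücker coordinate of V about u = t indexed by the single-column partition λ = (1^i), and Δ_∅(t) = Wr(f₁, …, f_N)(t). In particular D_V is a monic order-N linear differential operator annihilating V. -/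
open Equiv Matrix

lemma revPerm_succ (n : ℕ) :
    (Fin.revPerm : Perm (Fin (n + 1))) =
      finRotate (n + 1) *
        (finSuccEquivLast.symm.permCongr (Fin.revPerm : Perm (Fin n)).optionCongr) := by
  ext i
  induction i using Fin.lastCases with
  | last => simp [Fin.rev_last]
  | cast i =>
      simp [Fin.rev_castSucc, finSuccEquivLast_castSucc, finSuccEquivLast_symm_some,
        finRotate_succ_apply, Fin.coeSucc_eq_succ]

lemma sign_revPerm : ∀ n : ℕ, Perm.sign (Fin.revPerm : Perm (Fin n)) = (-1) ^ n.choose 2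
  | 0 => by simp [Subsingleton.elim (Fin.revPerm : Perm (Fin 0)) 1]
  | (n + 1) => by
      rw [revPerm_succ, _root_.map_mul, sign_finRotate, Perm.sign_permCongr, Equiv.optionCongr_sign,
        sign_revPerm n]
      rw [show (n + 1).choose 2 = n + n.choose 2 by
        rw [Nat.choose_succ_succ, Nat.choose_one_right], pow_add, Nat.add_sub_cancel]

lemma det_rev {n : ℕ} (M : Matrix (Fin n) (Fin n) ℝ) :
    Matrix.det (Matrix.of fun a j => M (Fin.rev a) j) = (-1) ^ n.choose 2 * M.det := by
  have := Matrix.det_permute (Fin.revPerm : Perm (Fin n)) M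
  rw [sign_revPerm] at this
  simp at this
  exact this




/-- Let `V` be an `N`-dimensional space (`N ≥ 1`) of `N`-times continuously
differentiable functions with basis `f₁, …, f_N`, and let `g` be `N`-times
continuously differentiable.  At a point `t` where `Wr(f₁, …, f_N)(t) ≠ 0`,
`D_V(g)(t) := Wr(f₁, …, f_N, g)(t) / Wr(f₁, …, f_N)(t)` satisfies
`D_V(g)(t) = ∑_{i=0}^{N} (−1)^i (Δ_{(1^i)}(t) / Δ_∅(t)) · g^{(N−i)}(t)`,
where `Δ_{(1^i)}(t) = (−1)^{C(N,2)} det(f_j^{(order a)}(t))` is the Plücker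
coordinate indexed by the single-column partition `(1^i)`, with row orders
(zero-indexed row `a`) equal to `N - a` for `a < i` and `N - 1 - a` for `a ≥ i`
(i.e. the orders `0, …, N` with `N - i` omitted); in particular
`Δ_∅(t) = Wr(f₁, …, f_N)(t)`, and `D_V` annihilates `V`:
`Wr(f₁, …, f_N, f_{j₀})(t) = 0` for each `j₀`. -/
theorem stmt17 {N : ℕ} (hN : 1 ≤ N) (f : Fin N → ℝ → ℝ) (g : ℝ → ℝ)
    (hf : ∀ j, ContDiff ℝ N (f j)) (hg : ContDiff ℝ N g) (t : ℝ)
    (hW : Matrix.det (Matrix.of fun i j : Fin N => iteratedDeriv (i : ℕ) (f j) t) ≠ 0)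
    (Δ : ℕ → ℝ)
    (hΔ : ∀ i : ℕ, Δ i = (-1 : ℝ) ^ Nat.choose N 2 *
        Matrix.det (Matrix.of fun a j : Fin N =>
          iteratedDeriv (if (a : ℕ) < i then N - (a : ℕ) else N - 1 - (a : ℕ)) (f j) t)) :
    Δ 0 = Matrix.det (Matrix.of fun i j : Fin N => iteratedDeriv (i : ℕ) (f j) t)
    ∧ Matrix.det (Matrix.of fun a j : Fin (N + 1) =>
          iteratedDeriv (a : ℕ) ((Fin.snoc f g : Fin (N + 1) → ℝ → ℝ) j) t)
        / Matrix.det (Matrix.of fun i j : Fin N => iteratedDeriv (i : ℕ) (f j) t)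
      = ∑ i ∈ Finset.range (N + 1),
          (-1 : ℝ) ^ i * (Δ i / Δ 0) * iteratedDeriv (N - i) g t
    ∧ ∀ j₀ : Fin N, Matrix.det (Matrix.of fun a j : Fin (N + 1) =>
        iteratedDeriv (a : ℕ) ((Fin.snoc f (f j₀) : Fin (N + 1) → ℝ → ℝ) j) t) = 0 := by
  set W : Matrix (Fin N) (Fin N) ℝ :=
    Matrix.of fun i j : Fin N => iteratedDeriv (i : ℕ) (f j) t with hWdef
  -- Part 1
  have h1 : Δ 0 = W.det := by
    rw [hΔ 0]
    have : (Matrix.of fun a j : Fin N =>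
        iteratedDeriv (if (a : ℕ) < 0 then N - (a : ℕ) else N - 1 - (a : ℕ)) (f j) t)
        = Matrix.of fun a j => W (Fin.rev a) j := by
      ext a j
      simp only [Matrix.of_apply, Fin.rev, hWdef]
      norm_num
      congr 1
      omega
    rw [this, det_rev, ← mul_assoc, ← pow_add, ← two_mul, pow_mul, neg_one_sq, one_pow, one_mul]
  refine ⟨h1, ?_, ?_⟩
  · -- Part 2
    set A : Matrix (Fin (N + 1)) (Fin (N + 1)) ℝ :=
      Matrix.of fun a j : Fin (N + 1) =>
        iteratedDeriv (a : ℕ) ((Fin.snoc f g : Fin (N + 1) → ℝ → ℝ) j) t with hAdef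
    have hminor : ∀ i : Fin (N + 1),
        Δ (N - (i : ℕ)) = (A.submatrix i.succAbove (Fin.last N).succAbove).det := by
      intro i
      rw [hΔ]
      have : (Matrix.of fun a j : Fin N =>
          iteratedDeriv (if (a : ℕ) < N - (i : ℕ) then N - (a : ℕ) else N - 1 - (a : ℕ))
            (f j) t)
          = Matrix.of fun a j =>
              (A.submatrix i.succAbove (Fin.last N).succAbove) (Fin.rev a) j := by
        ext a j
        have hij : (i : ℕ) ≤ N := Nat.lt_succ_iff.mp i.isLt
        have ha : (a : ℕ) < N := a.isLt
        have hcoe : ((i.succAbove (Fin.rev a)) : ℕ) =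
            if ((Fin.rev a : Fin N) : ℕ) < (i : ℕ) then ((Fin.rev a : Fin N) : ℕ)
            else ((Fin.rev a : Fin N) : ℕ) + 1 := by
          rw [Fin.succAbove]
          split_ifs with h h' h'
          · rfl
          · exact absurd (Fin.lt_iff_val_lt_val.mp h) (by simpa using h')
          · exact absurd (Fin.lt_iff_val_lt_val.mpr (by simpa using h')) h
          · rfl
        simp only [Matrix.submatrix_apply, hAdef, Matrix.of_apply, Fin.succAbove_last,
          Fin.snoc_castSucc, hcoe]
        congr 1
        simp only [Fin.val_rev]
        split_ifs <;> omega
      rw [this, det_rev, ← mul_assoc, ← pow_add, ← two_mul, pow_mul, neg_one_sq, one_pow,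
        one_mul]
    have hexp := Matrix.det_succ_column A (Fin.last N)
    have hAlast : ∀ i : Fin (N + 1), A i (Fin.last N) = iteratedDeriv (i : ℕ) g t := by
      intro i; simp [hAdef]
    rw [hexp, Finset.sum_div, ← (Fin.revPerm : Equiv.Perm (Fin (N + 1))).sum_comp _ _ (by simp),
      ← Fin.sum_univ_eq_sum_range
        (fun k => (-1 : ℝ) ^ k * (Δ k / Δ 0) * iteratedDeriv (N - k) g t) (N + 1)]
    refine Finset.sum_congr rfl fun x _ => ?_
    rw [hAlast, ← hminor]
    have hx : (x : ℕ) ≤ N := Nat.lt_succ_iff.mp x.isLt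
    have h2 : ((Fin.revPerm x : Fin (N + 1)) : ℕ) = N - (x : ℕ) := by
      simp [Fin.val_rev]
    rw [h2, Nat.sub_sub_self hx, h1, Fin.val_last]
    have hsign : ((-1 : ℝ)) ^ (N - (x : ℕ) + N) = (-1) ^ (x : ℕ) := by
      have h3 : N - (x : ℕ) + N = (x : ℕ) + 2 * (N - (x : ℕ)) := by omega
      rw [h3, pow_add, pow_mul, neg_one_sq, one_pow, mul_one]
    rw [hsign]
    ring
  · -- Part 3
    intro j₀
    apply Matrix.det_zero_of_column_eq (i := Fin.castSucc j₀) (j := Fin.last N)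
      (Fin.ne_of_lt (Fin.castSucc_lt_last j₀))
    intro k
    simp
end
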